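/- arXiv:1303.1847 — 4 statements merged into one kernel-verified Lean document; each statement's English description precedes it below -/
import Mathlib

section
/- Let Φ have coherence μ and let θ = μ̄² if Φ is coherence-invariant and θ = μ̄²_max otherwise; assume k < N/2 − 1. Let a ∈ (0,1) and β > 0 be constants and let 0 < α < β·log₂ e. If μ⁴ ≤ (1−a)²α³/(32βk) and kθ ≤ aα, then for a uniformly random pair (I, j) consisting of a k-subset I = {i₁,…,i_k} of {1,…,N} and an index j ∉ I, the probability that Σ_{l=1}^k μ_{i_l,j}² ≥ α is at most 2·e^{−β/α}. -/
open Finset Matrix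

open scoped Classical

noncomputable section

/-- The ℓ₂→ℓ₂ operator (spectral) norm of a real matrix. -/
def specNorm {α β : Type*} [Fintype α] [Fintype β] (A : Matrix α β ℝ) : ℝ :=
  sSup {t : ℝ | ∃ x : β → ℝ, (∑ j, x j ^ 2) ≤ 1 ∧ t = Real.sqrt (∑ i, (∑ j, A i j * x j) ^ 2)}

variable {m N : ℕ}

/-- The submatrix of `Φ` formed by the columns indexed by `I`. -/
def colSub (Φ : Matrix (Fin m) (Fin N) ℝ) (I : Finset (Fin N)) :
    Matrix (Fin m) {i // i ∈ I} ℝ :=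
  Matrix.of fun r j => Φ r (j : Fin N)

/-- The Gram matrix `Φ_Iᵀ Φ_I`. -/
def gram (Φ : Matrix (Fin m) (Fin N) ℝ) (I : Finset (Fin N)) :
    Matrix {i // i ∈ I} {i // i ∈ I} ℝ :=
  (colSub Φ I)ᵀ * colSub Φ I

/-- `‖Φ_Iᵀ φ_i‖₂²`. -/
def sincSq (Φ : Matrix (Fin m) (Fin N) ℝ) (I : Finset (Fin N)) (i : Fin N) : ℝ :=
  ∑ j ∈ I, (∑ r, Φ r j * Φ r i) ^ 2

/-- All columns of `Φ` have unit ℓ₂ norm. -/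
def unitCols (Φ : Matrix (Fin m) (Fin N) ℝ) : Prop :=
  ∀ j, (∑ r, Φ r j ^ 2) = 1

/-- `Φ` is `(k,δ,ε)`-StRIP: a uniformly random `k`-subset `I` satisfies
`‖Φ_Iᵀ Φ_I − Id‖ ≤ δ` with probability at least `1 − ε`. -/
def StRIP (Φ : Matrix (Fin m) (Fin N) ℝ) (k : ℕ) (δ ε : ℝ) : Prop :=
  (1 - ε) * ((Finset.powersetCard k (univ : Finset (Fin N))).card : ℝ) ≤
    (((Finset.powersetCard k (univ : Finset (Fin N))).filter
        fun I => specNorm (gram Φ I - 1) ≤ δ).card : ℝ)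

/-- `Φ` is `(k,α,ε)`-SINC: a uniformly random `k`-subset `I` satisfies
`max_{i ∉ I} ‖Φ_Iᵀ φ_i‖₂² ≤ α` with probability at least `1 − ε`. -/
def SINC (Φ : Matrix (Fin m) (Fin N) ℝ) (k : ℕ) (α ε : ℝ) : Prop :=
  (1 - ε) * ((Finset.powersetCard k (univ : Finset (Fin N))).card : ℝ) ≤
    (((Finset.powersetCard k (univ : Finset (Fin N))).filter
        fun I => ∀ i ∉ I, sincSq Φ I i ≤ α).card : ℝ)

/-- ℓ₁ norm on `ℝ^N`. -/
def l1 (x : Fin N → ℝ) : ℝ := ∑ i, |x i|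

/-- ℓ₂ norm on `ℝ^N`. -/
def l2 (x : Fin N → ℝ) : ℝ := Real.sqrt (∑ i, x i ^ 2)

/-- Restriction `x_I` of a vector to the coordinates in `I` (zero outside `I`). -/
def restr (I : Finset (Fin N)) (x : Fin N → ℝ) : Fin N → ℝ :=
  fun i => if i ∈ I then x i else 0

/-- `x` is `k`-sparse. -/
def kSparse (k : ℕ) (x : Fin N → ℝ) : Prop :=
  ((univ : Finset (Fin N)).filter fun i => x i ≠ 0).card ≤ k

/-- `min_{x' k-sparse} ‖x − x′‖₁`. -/
def bestK (k : ℕ) (x : Fin N → ℝ) : ℝ :=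
  sInf {t : ℝ | ∃ x' : Fin N → ℝ, kSparse k x' ∧ t = l1 (x - x')}

/-- `xh` is a (noiseless) Basis Pursuit solution for the data `y`. -/
def isBPsol (Φ : Matrix (Fin m) (Fin N) ℝ) (y : Fin m → ℝ) (xh : Fin N → ℝ) : Prop :=
  Φ.mulVec xh = y ∧ ∀ u : Fin N → ℝ, Φ.mulVec u = y → l1 xh ≤ l1 u

/-- Inner product of columns `i` and `j` of `Φ`. -/
def ip (Φ : Matrix (Fin m) (Fin N) ℝ) (i j : Fin N) : ℝ := ∑ r, Φ r i * Φ r j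

/-- Mean square coherence `μ̄² = (1/(N(N−1))) Σ_{i≠j} μ_ij²`. -/
def mu2bar (Φ : Matrix (Fin m) (Fin N) ℝ) : ℝ :=
  (∑ i, ∑ j ∈ (univ : Finset (Fin N)).erase i, (ip Φ i j) ^ 2) / ((N : ℝ) * ((N : ℝ) - 1))

/-- Maximum average square coherence `μ̄²_max = max_j (1/(N−1)) Σ_{i≠j} μ_ij²`. -/
def mu2max (Φ : Matrix (Fin m) (Fin N) ℝ) : ℝ :=
  sSup {t : ℝ | ∃ j : Fin N,
    t = (∑ i ∈ (univ : Finset (Fin N)).erase j, (ip Φ i j) ^ 2) / ((N : ℝ) - 1)}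

/-- `Φ` is coherence-invariant: the multiset `{μ_ij : j ≠ i}` does not depend on `i`. -/
def CoherenceInvariant (Φ : Matrix (Fin m) (Fin N) ℝ) : Prop :=
  ∀ i i' : Fin N,
    Multiset.map (fun j => |ip Φ i j|) ((univ : Finset (Fin N)).erase i).val =
    Multiset.map (fun j => |ip Φ i' j|) ((univ : Finset (Fin N)).erase i').val

/-- The set of pairs `(I, j)` with `I` a `k`-subset of `[N]` and `j ∉ I`. -/
def pairsFinset (N k : ℕ) : Finset (Finset (Fin N) × Fin N) :=
  (Finset.powersetCard k (univ : Finset (Fin N)) ×ˢ (univ : Finset (Fin N))).filter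
    fun p => p.2 ∉ p.1

section Helpers

lemma exp_le_quad {x : ℝ} (h : |x| ≤ 1) : Real.exp x ≤ 1 + x + x^2 := by
  have h2 := Real.exp_bound h (by norm_num : 0 < 2)
  have hs : ∑ i ∈ Finset.range 2, x^i / i.factorial = 1 + x := by
    simp [Finset.sum_range_succ]
  rw [hs] at h2
  have h3 : Real.exp x - (1 + x) ≤ |x|^2 * ((2:ℕ).succ / ((2:ℕ).factorial * 2)) :=
    (le_abs_self _).trans h2
  have : ((2:ℕ).succ / ((2:ℕ).factorial * 2) : ℝ) = 3/4 := by norm_num [Nat.factorial]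
  rw [this] at h3
  nlinarith [sq_abs x, sq_nonneg x]

lemma double_count {γ : Type*} [DecidableEq γ] (Q : Finset γ) (k : ℕ) (f : Finset γ → ℝ) :
    ((k+1 : ℕ) : ℝ) * ∑ I ∈ Q.powersetCard (k+1), f I =
      ∑ x ∈ Q, ∑ J ∈ (Q.erase x).powersetCard k, f (insert x J) := by
  rw [Finset.mul_sum]
  have h1 : ∀ I ∈ Q.powersetCard (k+1), ((k+1:ℕ):ℝ) * f I = ∑ x ∈ I, f I := by
    intro I hI
    rw [Finset.sum_const, (Finset.mem_powersetCard.1 hI).2]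
    simp
  rw [Finset.sum_congr rfl h1, Finset.sum_sigma' (Q.powersetCard (k+1)) (fun I => I)
    (fun I _ => f I), Finset.sum_sigma' Q (fun x => (Q.erase x).powersetCard k)
    (fun x J => f (insert x J))]
  refine Finset.sum_nbij' (i := fun p => ⟨p.2, p.1.erase p.2⟩)
    (j := fun p => ⟨insert p.1 p.2, p.1⟩) ?_ ?_ ?_ ?_ ?_
  · rintro ⟨I, x⟩ hp
    simp only [Finset.mem_sigma, Finset.mem_powersetCard] at hp ⊢
    obtain ⟨⟨hIQ, hIc⟩, hxI⟩ := hp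
    refine ⟨hIQ hxI, ?_, ?_⟩
    · intro y hy
      rw [Finset.mem_erase] at hy ⊢
      exact ⟨hy.1, hIQ hy.2⟩
    · rw [Finset.card_erase_of_mem hxI, hIc]; rfl
  · rintro ⟨x, J⟩ hp
    simp only [Finset.mem_sigma, Finset.mem_powersetCard] at hp ⊢
    obtain ⟨hxQ, hJQ, hJc⟩ := hp
    have hxJ : x ∉ J := fun h => Finset.notMem_erase x Q (hJQ h)
    constructor
    · constructor
      · intro y hy
        rcases Finset.mem_insert.1 hy with rfl | hyJ
        · exact hxQ
        · exact (Finset.mem_erase.1 (hJQ hyJ)).2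
      · rw [Finset.card_insert_of_notMem hxJ, hJc]
    · exact Finset.mem_insert_self x J
  · rintro ⟨I, x⟩ hp
    simp only [Finset.mem_sigma] at hp
    simp [Finset.insert_erase hp.2]
  · rintro ⟨x, J⟩ hp
    simp only [Finset.mem_sigma, Finset.mem_powersetCard] at hp
    have hxJ : x ∉ J := fun h => Finset.notMem_erase x Q (hp.2.1 h)
    simp [Finset.erase_insert hxJ]
  · rintro ⟨I, x⟩ hp
    simp only [Finset.mem_sigma] at hp
    simp [Finset.insert_erase hp.2]

lemma sum_exp_le {γ : Type*} (Q : Finset γ) (hQ : Q.Nonempty) (w : γ → ℝ) (B L : ℝ)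
    (hL : 0 ≤ L) (hLB : L * B ≤ 1) (hw : ∀ x ∈ Q, 0 ≤ w x ∧ w x ≤ B) :
    ∑ x ∈ Q, Real.exp (L * w x) ≤
      (Q.card : ℝ) * Real.exp (L * (∑ x ∈ Q, w x) / Q.card + L^2 * B^2) := by
  have hn : (0:ℝ) < Q.card := by exact_mod_cast Finset.card_pos.2 hQ
  set n : ℝ := (Q.card : ℝ)
  set m : ℝ := (∑ x ∈ Q, w x) / n with hm
  obtain ⟨x₀, hx₀⟩ := hQ
  have hB0 : 0 ≤ B := (hw x₀ hx₀).1.trans (hw x₀ hx₀).2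
  have hsum0 : 0 ≤ ∑ x ∈ Q, w x := Finset.sum_nonneg fun x hx => (hw x hx).1
  have hsumB : ∑ x ∈ Q, w x ≤ n * B := by
    calc ∑ x ∈ Q, w x ≤ ∑ _x ∈ Q, B := Finset.sum_le_sum fun x hx => (hw x hx).2
      _ = n * B := by rw [Finset.sum_const, nsmul_eq_mul]
  have hm0 : 0 ≤ m := div_nonneg hsum0 hn.le
  have hmB : m ≤ B := by rw [hm, div_le_iff₀ hn]; linarith [hsumB]
  have key : ∀ x ∈ Q, Real.exp (L * w x)
      ≤ Real.exp (L * m) * (1 + L * (w x - m) + L^2 * B^2) := by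
    intro x hx
    have habs : |L * (w x - m)| ≤ L * B := by
      rw [abs_mul, abs_of_nonneg hL]
      have : |w x - m| ≤ B := abs_sub_le_iff.2 ⟨by linarith [(hw x hx).2], by linarith [(hw x hx).1]⟩
      exact mul_le_mul_of_nonneg_left this hL
    have h2 := exp_le_quad (habs.trans hLB)
    have h3 : (L * (w x - m))^2 ≤ L^2 * B^2 := by
      have := pow_le_pow_left₀ (abs_nonneg _) habs 2
      rw [sq_abs] at this
      calc (L * (w x - m))^2 ≤ (L*B)^2 := this
        _ = L^2 * B^2 := by ring
    have : Real.exp (L * w x) = Real.exp (L * m) * Real.exp (L * (w x - m)) := by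
      rw [← Real.exp_add]; ring_nf
    rw [this]
    have := (Real.exp_pos (L * m)).le
    nlinarith [Real.exp_pos (L * m), h2, h3]
  calc ∑ x ∈ Q, Real.exp (L * w x)
      ≤ ∑ x ∈ Q, Real.exp (L * m) * (1 + L * (w x - m) + L^2 * B^2) :=
        Finset.sum_le_sum key
    _ = Real.exp (L * m) * (n * (1 + L^2*B^2) + L * ((∑ x ∈ Q, w x) - n * m)) := by
        rw [← Finset.mul_sum]
        congr 1
        rw [Finset.sum_add_distrib, Finset.sum_add_distrib, Finset.sum_const, Finset.sum_const,
          ← Finset.mul_sum, Finset.sum_sub_distrib, Finset.sum_const, nsmul_eq_mul, nsmul_eq_mul,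
          nsmul_eq_mul]
        ring
    _ = n * (Real.exp (L * m) * (1 + L^2*B^2)) := by
        have : n * m = ∑ x ∈ Q, w x := by rw [hm, mul_div_cancel₀]; exact hn.ne'
        rw [this]; ring
    _ ≤ n * (Real.exp (L * m) * Real.exp (L^2*B^2)) := by
        have h4 : (1:ℝ) + L^2*B^2 ≤ Real.exp (L^2*B^2) := by
          have := Real.add_one_le_exp (L^2*B^2); linarith
        have := Real.exp_pos (L*m)
        gcongr
    _ = n * Real.exp (L * m + L^2*B^2) := by rw [Real.exp_add]
    _ = n * Real.exp (L * (∑ x ∈ Q, w x) / n + L^2 * B^2) := by rw [hm]; ring_nf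

lemma mgf_bound {γ : Type*} [DecidableEq γ] (B L : ℝ) (hL : 0 ≤ L) (hLB : L * B ≤ 1)
    (v : γ → ℝ) :
    ∀ (k : ℕ) (Q : Finset γ), (∀ x ∈ Q, 0 ≤ v x ∧ v x ≤ B) →
    ∑ I ∈ Q.powersetCard k, Real.exp (L * ∑ i ∈ I, v i) ≤
      (Q.card.choose k : ℝ) *
        Real.exp (L * k * (∑ i ∈ Q, v i) / Q.card + k * L^2 * B^2) := by
  intro k
  induction k with
  | zero => intro Q hv; simp
  | succ k ih =>
    intro Q hv
    rcases Q.eq_empty_or_nonempty with rfl | hQ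
    · rw [Finset.powersetCard_eq_empty.2 (by simp : (∅ : Finset γ).card < k+1)]
      simp
    by_cases hkQ : k + 1 ≤ Q.card
    swap
    · push_neg at hkQ
      rw [Finset.powersetCard_eq_empty.2 hkQ, Nat.choose_eq_zero_of_lt hkQ]
      simp
    obtain ⟨x₀, hx₀⟩ := hQ
    have hQne : Q.Nonempty := ⟨x₀, hx₀⟩
    have hn1 : 1 ≤ Q.card := le_trans (Nat.le_add_left 1 k) hkQ
    have hnR : (1:ℝ) ≤ (Q.card : ℝ) := by exact_mod_cast hn1
    have hB0 : 0 ≤ B := (hv x₀ hx₀).1.trans (hv x₀ hx₀).2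
    set n := Q.card with hn
    set S := ∑ i ∈ Q, v i with hS
    set c : ℝ := 1 - (k:ℝ)/((n:ℝ)-1) with hc
    have hcases : (2 ≤ n ∧ (0:ℝ) < (n:ℝ) - 1) ∨ (n = 1 ∧ k = 0) := by
      rcases Nat.lt_or_ge n 2 with h | h
      · right
        have : n = 1 := le_antisymm (by omega) hn1
        exact ⟨this, by omega⟩
      · left
        refine ⟨h, ?_⟩
        have : (2:ℝ) ≤ (n:ℝ) := by exact_mod_cast h
        linarith
    have hfrac : (k:ℝ)/((n:ℝ)-1) ≤ 1 ∧ 0 ≤ (k:ℝ)/((n:ℝ)-1) := by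
      rcases hcases with ⟨h2, hpos⟩ | ⟨hn1', hk0⟩
      · constructor
        · rw [div_le_one hpos]
          have : (k:ℝ) + 1 ≤ (n:ℝ) := by exact_mod_cast hkQ
          linarith
        · positivity
      · rw [hn1', hk0]; norm_num
    have hc0 : 0 ≤ c := by rw [hc]; linarith [hfrac.1]
    have hc1 : c ≤ 1 := by rw [hc]; linarith [hfrac.2]
    have hkey : (k:ℝ)/((n:ℝ)-1) + c/(n:ℝ) = ((k:ℝ)+1)/(n:ℝ) := by
      rcases hcases with ⟨h2, hpos⟩ | ⟨hn1', hk0⟩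
      · rw [hc]; field_simp; ring
      · have hc' : c = 1 := by rw [hc, hk0]; norm_num
        rw [hc', hn1', hk0]; norm_num
    have hkpos : (0:ℝ) < ((k+1:ℕ):ℝ) := by positivity
    rw [← mul_le_mul_iff_right₀ hkpos]
    rw [double_count Q k (fun I => Real.exp (L * ∑ i ∈ I, v i))]
    have hcard_erase : ∀ x ∈ Q, (((Q.erase x).card : ℕ) : ℝ) = (n:ℝ) - 1 := by
      intro x hx
      rw [Finset.card_erase_of_mem hx, ← hn]
      push_cast [Nat.cast_sub hn1]
      ring
    calc ∑ x ∈ Q, ∑ J ∈ (Q.erase x).powersetCard k, Real.exp (L * ∑ i ∈ insert x J, v i)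
        = ∑ x ∈ Q, Real.exp (L * v x) *
            ∑ J ∈ (Q.erase x).powersetCard k, Real.exp (L * ∑ i ∈ J, v i) := by
          refine Finset.sum_congr rfl fun x hx => ?_
          rw [Finset.mul_sum]
          refine Finset.sum_congr rfl fun J hJ => ?_
          have hxJ : x ∉ J := fun h =>
            Finset.notMem_erase x Q ((Finset.mem_powersetCard.1 hJ).1 h)
          rw [Finset.sum_insert hxJ, mul_add, Real.exp_add]
      _ ≤ ∑ x ∈ Q, Real.exp (L * v x) * (((n-1).choose k : ℝ) *
            Real.exp (L * k * (S - v x) / ((n:ℝ)-1) + k * L^2 * B^2)) := by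
          refine Finset.sum_le_sum fun x hx => ?_
          refine mul_le_mul_of_nonneg_left ?_ (Real.exp_pos _).le
          have hIH := ih (Q.erase x) (fun y hy => hv y (Finset.mem_of_mem_erase hy))
          rw [Finset.card_erase_of_mem hx] at hIH
          have hsub : ∑ i ∈ Q.erase x, v i = S - v x := by
            rw [hS, Finset.sum_erase_eq_sub hx]
          rw [hsub] at hIH
          have : (((n - 1 : ℕ)) : ℝ) = (n:ℝ) - 1 := by
            push_cast [Nat.cast_sub hn1]; ring
          rw [this] at hIH
          exact hIH
      _ = ((n-1).choose k : ℝ) * Real.exp ((k:ℝ) * L^2 * B^2 + L * (k:ℝ) * S / ((n:ℝ)-1)) *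
            ∑ x ∈ Q, Real.exp (L * (c * v x)) := by
          rw [Finset.mul_sum]
          refine Finset.sum_congr rfl fun x hx => ?_
          have hE : L * v x + (L * (k:ℝ) * (S - v x) / ((n:ℝ)-1) + (k:ℝ) * L^2 * B^2) =
              ((k:ℝ) * L^2 * B^2 + L * (k:ℝ) * S / ((n:ℝ)-1)) + L * (c * v x) := by
            rw [hc]; ring
          calc Real.exp (L * v x) * (((n-1).choose k : ℝ) *
                Real.exp (L * (k:ℝ) * (S - v x) / ((n:ℝ)-1) + (k:ℝ) * L^2 * B^2))
              = ((n-1).choose k : ℝ) * Real.exp (L * v x +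
                  (L * (k:ℝ) * (S - v x) / ((n:ℝ)-1) + (k:ℝ) * L^2 * B^2)) := by
                rw [Real.exp_add (L * v x)
                  (L * (k:ℝ) * (S - v x) / ((n:ℝ)-1) + (k:ℝ) * L^2 * B^2)]
                ring
            _ = ((n-1).choose k : ℝ) * Real.exp (((k:ℝ) * L^2 * B^2 +
                  L * (k:ℝ) * S / ((n:ℝ)-1)) + L * (c * v x)) := by rw [hE]
            _ = ((n-1).choose k : ℝ) *
                  Real.exp ((k:ℝ) * L^2 * B^2 + L * (k:ℝ) * S / ((n:ℝ)-1)) *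
                  Real.exp (L * (c * v x)) := by
                rw [Real.exp_add ((k:ℝ) * L^2 * B^2 + L * (k:ℝ) * S / ((n:ℝ)-1))
                  (L * (c * v x))]
                ring
      _ ≤ ((n-1).choose k : ℝ) * Real.exp ((k:ℝ) * L^2 * B^2 + L * (k:ℝ) * S / ((n:ℝ)-1)) *
            ((n : ℝ) * Real.exp (L * (∑ x ∈ Q, c * v x) / (n:ℝ) + L^2 * B^2)) := by
          refine mul_le_mul_of_nonneg_left ?_ (by positivity)
          exact sum_exp_le Q hQne (fun x => c * v x) B L hL hLB
            (fun x hx => ⟨mul_nonneg hc0 (hv x hx).1,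
              le_trans (mul_le_of_le_one_left (hv x hx).1 hc1) (hv x hx).2⟩)
      _ = ((k+1:ℕ):ℝ) * ((Q.card.choose (k+1) : ℝ) *
            Real.exp (L * ((k+1:ℕ):ℝ) * S / (Q.card:ℝ) + ((k+1:ℕ):ℝ) * L^2 * B^2)) := by
          have hsum : ∑ x ∈ Q, c * v x = c * S := by rw [hS, Finset.mul_sum]
          rw [hsum]
          have hchoose : (n:ℕ) * (n-1).choose k = n.choose (k+1) * (k+1) := by
            have := Nat.add_one_mul_choose_eq (n-1) k
            have hsucc : n - 1 + 1 = n := by omega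
            rwa [hsucc] at this
          have hchooseR : ((n:ℝ)) * ((n-1).choose k : ℝ) = (n.choose (k+1) : ℝ) * ((k+1:ℕ):ℝ) := by
            exact_mod_cast congrArg (Nat.cast : ℕ → ℝ) hchoose
          have hexp : (k:ℝ) * L^2 * B^2 + L * (k:ℝ) * S / ((n:ℝ)-1) +
              (L * (c * S) / (n:ℝ) + L^2 * B^2) =
              L * ((k+1:ℕ):ℝ) * S / (n:ℝ) + ((k+1:ℕ):ℝ) * L^2 * B^2 := by
            have e1 : L * (k:ℝ) * S / ((n:ℝ)-1) + L * (c * S) / (n:ℝ) =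
                L * S * ((k:ℝ)/((n:ℝ)-1) + c/(n:ℝ)) := by ring
            have e2 : L * S * (((k:ℝ)+1)/(n:ℝ)) = L * ((k+1:ℕ):ℝ) * S / (n:ℝ) := by
              push_cast; ring
            push_cast
            rw [show (k:ℝ) * L^2 * B^2 + L * (k:ℝ) * S / ((n:ℝ)-1) +
                (L * (c * S) / (n:ℝ) + L^2 * B^2) =
                (L * (k:ℝ) * S / ((n:ℝ)-1) + L * (c * S) / (n:ℝ)) +
                ((k:ℝ)+1) * L^2 * B^2 by ring, e1, hkey]
            ring
          rw [← hn]
          calc ((n-1).choose k : ℝ) *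
                Real.exp ((k:ℝ) * L^2 * B^2 + L * (k:ℝ) * S / ((n:ℝ)-1)) *
                ((n : ℝ) * Real.exp (L * (c * S) / (n:ℝ) + L^2 * B^2))
              = ((n:ℝ) * ((n-1).choose k : ℝ)) *
                Real.exp ((k:ℝ) * L^2 * B^2 + L * (k:ℝ) * S / ((n:ℝ)-1) +
                  (L * (c * S) / (n:ℝ) + L^2 * B^2)) := by
                rw [Real.exp_add ((k:ℝ) * L^2 * B^2 + L * (k:ℝ) * S / ((n:ℝ)-1))
                  (L * (c * S) / (n:ℝ) + L^2 * B^2)]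
                ring
            _ = ((k+1:ℕ):ℝ) * ((n.choose (k+1) : ℝ) *
                Real.exp (L * ((k+1:ℕ):ℝ) * S / (n:ℝ) + ((k+1:ℕ):ℝ) * L^2 * B^2)) := by
                rw [hexp, hchooseR]; ring

end Helpers

set_option maxHeartbeats 1000000

/-- Corollary: tail bound for `Σ_l μ_{i_l,j}²` over a random pair. -/
theorem stmt10 (m N k : ℕ) (hk : (k : ℝ) < N / 2 - 1)
    (a β α μ θ : ℝ) (ha0 : 0 < a) (ha1 : a < 1) (hβ : 0 < β)
    (hα0 : 0 < α) (hα1 : α < β * Real.logb 2 (Real.exp 1))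
    (Φ : Matrix (Fin m) (Fin N) ℝ) (hcols : unitCols Φ)
    (hμ : ∀ i j : Fin N, i ≠ j → |ip Φ i j| ≤ μ)
    (hθ : (CoherenceInvariant Φ ∧ θ = mu2bar Φ) ∨ θ = mu2max Φ)
    (h1 : μ ^ 4 ≤ (1 - a) ^ 2 * α ^ 3 / (32 * β * k))
    (h2 : k * θ ≤ a * α) :
    (((pairsFinset N k).filter fun p => α ≤ sincSq Φ p.1 p.2).card : ℝ) ≤
      2 * Real.exp (-β / α) * ((pairsFinset N k).card : ℝ) := by
  classical
  have hkR0 : (0:ℝ) ≤ (k:ℝ) := Nat.cast_nonneg k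
  have hN2 : (2:ℝ) < (N:ℝ) := by linarith [hk, hkR0]
  have hN3 : (2:ℕ) < N := by exact_mod_cast hN2
  have hN1 : 1 ≤ N := by omega
  have hNR1 : (1:ℝ) ≤ (N:ℝ) := by exact_mod_cast hN1
  have hNsub : ((N - 1 : ℕ) : ℝ) = (N:ℝ) - 1 := by
    push_cast [Nat.cast_sub hN1]; ring
  have ha1' : (0:ℝ) < 1 - a := by linarith
  have hβα : 0 < β / α := div_pos hβ hα0
  set Cnk : ℝ := (((N-1).choose k : ℕ) : ℝ) with hCdef
  have hCnk0 : 0 ≤ Cnk := Nat.cast_nonneg _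
  -- the per-column tail bound
  have main : ∀ j : Fin N,
      (((Finset.powersetCard k ((univ : Finset (Fin N)).erase j)).filter
          (fun I => α ≤ sincSq Φ I j)).card : ℝ)
        ≤ 2 * Real.exp (-β / α) * Cnk := by
    intro j
    set Q : Finset (Fin N) := (univ : Finset (Fin N)).erase j with hQdef
    have hQcard : Q.card = N - 1 := by
      rw [hQdef, Finset.card_erase_of_mem (Finset.mem_univ j), Finset.card_univ,
        Fintype.card_fin]
    have hQcardR : ((Q.card : ℕ) : ℝ) = (N:ℝ) - 1 := by rw [hQcard, hNsub]
    set v : Fin N → ℝ := fun i => (ip Φ i j)^2 with hvdef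
    have hsinc : ∀ I : Finset (Fin N), sincSq Φ I j = ∑ i ∈ I, v i := fun I => rfl
    have hQne : Q.Nonempty := by
      rw [← Finset.card_pos, hQcard]; omega
    obtain ⟨i₀, hi₀⟩ := hQne
    have hμ0 : 0 ≤ μ := le_trans (abs_nonneg _) (hμ i₀ j (Finset.ne_of_mem_erase hi₀))
    have hv : ∀ x ∈ Q, 0 ≤ v x ∧ v x ≤ μ^2 := by
      intro x hx
      refine ⟨sq_nonneg _, ?_⟩
      have h := hμ x j (Finset.ne_of_mem_erase hx)
      calc v x = |ip Φ x j|^2 := (sq_abs _).symm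
        _ ≤ μ^2 := pow_le_pow_left₀ (abs_nonneg _) h 2
    set S : ℝ := ∑ i ∈ Q, v i with hSdef
    have hS0 : 0 ≤ S := Finset.sum_nonneg fun x hx => (hv x hx).1
    have hSθ : S / ((N:ℝ) - 1) ≤ θ := by
      have hSform : S = ∑ i ∈ (univ : Finset (Fin N)).erase j, (ip Φ i j)^2 := rfl
      rcases hθ with ⟨hCI, hθeq⟩ | hθeq
      · have hrowe : ∀ i : Fin N, ∑ x ∈ (univ : Finset (Fin N)).erase i, (ip Φ i x)^2 =
            ((((univ : Finset (Fin N)).erase i).val.map (fun x => |ip Φ i x|)).map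
              (fun t => t^2)).sum := by
          intro i
          rw [Multiset.map_map, Finset.sum_eq_multiset_sum]
          refine congrArg Multiset.sum (Multiset.map_congr rfl fun x _ => ?_)
          simp [sq_abs]
        have hrow : ∀ i : Fin N, ∑ x ∈ (univ : Finset (Fin N)).erase i, (ip Φ i x)^2 =
            ∑ x ∈ (univ : Finset (Fin N)).erase j, (ip Φ j x)^2 := by
          intro i
          rw [hrowe i, hrowe j, hCI i j]
        have hipsymm : ∀ x : Fin N, ip Φ x j = ip Φ j x := fun x =>
          Finset.sum_congr rfl fun r _ => mul_comm _ _
        have hSrow : S = ∑ x ∈ (univ : Finset (Fin N)).erase j, (ip Φ j x)^2 := by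
          rw [hSform]
          exact Finset.sum_congr rfl fun x _ => by rw [hipsymm x]
        have hbar : mu2bar Φ = S / ((N:ℝ)-1) := by
          simp only [mu2bar]
          have hc : ∀ i ∈ (univ : Finset (Fin N)),
              ∑ x ∈ (univ : Finset (Fin N)).erase i, (ip Φ i x)^2 = S := by
            intro i _
            rw [hrow i, ← hSrow]
          rw [Finset.sum_congr rfl hc, Finset.sum_const, Finset.card_univ, Fintype.card_fin,
            nsmul_eq_mul]
          have hNne : (N:ℝ) ≠ 0 := by linarith
          have hN1ne : (N:ℝ) - 1 ≠ 0 := by linarith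
          field_simp
        rw [hθeq]
        exact le_of_eq hbar.symm
      · rw [hθeq]
        simp only [mu2max]
        have hset : {t : ℝ | ∃ j' : Fin N,
            t = (∑ i ∈ (univ : Finset (Fin N)).erase j', (ip Φ i j') ^ 2) / ((N : ℝ) - 1)} =
            Set.range (fun j' : Fin N =>
              (∑ i ∈ (univ : Finset (Fin N)).erase j', (ip Φ i j') ^ 2) / ((N : ℝ) - 1)) := by
          ext u; simp [eq_comm]
        rw [hset]
        refine le_csSup (Set.finite_range _).bddAbove ⟨j, ?_⟩
        show (∑ i ∈ (univ : Finset (Fin N)).erase j, (ip Φ i j) ^ 2) / ((N : ℝ) - 1) =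
          S / ((N:ℝ) - 1)
        rw [← hSform]
    have hmean : (k:ℝ) * (S / ((N:ℝ)-1)) ≤ a * α :=
      le_trans (mul_le_mul_of_nonneg_left hSθ hkR0) h2
    by_cases hbig : (k:ℝ) * μ^2 < α
    · have hempty : (Finset.powersetCard k Q).filter (fun I => α ≤ sincSq Φ I j) = ∅ := by
        rw [Finset.filter_eq_empty_iff]
        intro I hI
        have hIQ := Finset.mem_powersetCard.1 hI
        have hle : sincSq Φ I j ≤ (k:ℝ) * μ^2 := by
          rw [hsinc]
          calc ∑ i ∈ I, v i ≤ ∑ _i ∈ I, μ^2 :=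
              Finset.sum_le_sum fun i hi => (hv i (hIQ.1 hi)).2
            _ = (I.card : ℝ) * μ^2 := by rw [Finset.sum_const, nsmul_eq_mul]
            _ = (k:ℝ) * μ^2 := by rw [hIQ.2]
        intro hcon
        linarith
      rw [hempty]
      simp only [Finset.card_empty, Nat.cast_zero]
      positivity
    · push_neg at hbig
      have hk0 : k ≠ 0 := by
        rintro rfl
        simp only [Nat.cast_zero, zero_mul] at hbig
        linarith
      have hkRpos : (0:ℝ) < (k:ℝ) := by exact_mod_cast Nat.pos_of_ne_zero hk0
      have hμ2 : 0 < μ^2 := by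
        by_contra hcon
        push_neg at hcon
        have := mul_nonpos_of_nonneg_of_nonpos hkRpos.le hcon
        linarith
      have hμ4 : 0 < μ^4 := by
        have h4 : μ^4 = (μ^2)^2 := by ring
        rw [h4]; exact pow_pos hμ2 2
      have hK : 0 < (k:ℝ) * μ^4 := mul_pos hkRpos hμ4
      set t : ℝ := (1-a)*α with htdef
      have ht : 0 < t := mul_pos ha1' hα0
      set L : ℝ := t / (2*((k:ℝ)*μ^4)) with hLdef
      have hL : 0 ≤ L := le_of_lt (div_pos ht (by linarith))
      have htα : t ≤ α := by
        have hta : t = α - a*α := by rw [htdef]; ring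
        have := mul_pos ha0 hα0
        linarith
      have hLB : L * μ^2 ≤ 1 := by
        rw [hLdef, div_mul_eq_mul_div, div_le_one (by linarith)]
        have hh := mul_le_mul_of_nonneg_right (htα.trans hbig) hμ2.le
        have h4 : (k:ℝ)*μ^2*μ^2 = (k:ℝ)*μ^4 := by ring
        rw [h4] at hh
        linarith
      have hmgf := mgf_bound (μ^2) L hL hLB v k Q hv
      rw [hQcardR, hQcard] at hmgf
      have hmarkov : ((((Finset.powersetCard k Q).filter
          (fun I => α ≤ sincSq Φ I j)).card : ℝ)) * Real.exp (L * α) ≤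
          ∑ I ∈ Finset.powersetCard k Q, Real.exp (L * ∑ i ∈ I, v i) := by
        calc ((((Finset.powersetCard k Q).filter (fun I => α ≤ sincSq Φ I j)).card : ℝ))
              * Real.exp (L * α)
            = ((Finset.powersetCard k Q).filter (fun I => α ≤ sincSq Φ I j)).card
              • Real.exp (L * α) := by rw [nsmul_eq_mul]
          _ ≤ ∑ I ∈ (Finset.powersetCard k Q).filter (fun I => α ≤ sincSq Φ I j),
              Real.exp (L * ∑ i ∈ I, v i) := by
              refine Finset.card_nsmul_le_sum _ _ _ fun I hI => ?_
              have hle := (Finset.mem_filter.1 hI).2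
              rw [hsinc] at hle
              exact Real.exp_le_exp.2 (mul_le_mul_of_nonneg_left hle hL)
          _ ≤ ∑ I ∈ Finset.powersetCard k Q, Real.exp (L * ∑ i ∈ I, v i) :=
              Finset.sum_le_sum_of_subset_of_nonneg (Finset.filter_subset _ _)
                fun _ _ _ => (Real.exp_pos _).le
      have h3 := hmarkov.trans hmgf
      have hEbound : L * (k:ℝ) * S / ((N:ℝ)-1) + (k:ℝ) * L^2 * (μ^2)^2 - L*α ≤ -(β/α) := by
        have e1 : L * (k:ℝ) * S / ((N:ℝ)-1) ≤ L * (a*α) := by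
          have : L * (k:ℝ) * S / ((N:ℝ)-1) = L * ((k:ℝ) * (S / ((N:ℝ)-1))) := by ring
          rw [this]
          exact mul_le_mul_of_nonneg_left hmean hL
        have e2 : (k:ℝ) * L^2 * (μ^2)^2 = t^2/(4*((k:ℝ)*μ^4)) := by
          rw [hLdef]
          field_simp
          ring
        have e3 : L * α - L * (a*α) = t^2/(2*((k:ℝ)*μ^4)) := by
          rw [hLdef, htdef]
          field_simp
        have hKh1 : 32*β*((k:ℝ)*μ^4) ≤ (1-a)^2 * α^3 := by
          have h32 : (0:ℝ) < 32*β*(k:ℝ) := by positivity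
          have := mul_le_mul_of_nonneg_left h1 h32.le
          have hne : 32*β*(k:ℝ) ≠ 0 := ne_of_gt h32
          calc 32*β*((k:ℝ)*μ^4) = (32*β*(k:ℝ))*μ^4 := by ring
            _ ≤ (32*β*(k:ℝ)) * ((1-a)^2*α^3/(32*β*(k:ℝ))) := this
            _ = (1-a)^2*α^3 := by field_simp
        have hfinal : β/α ≤ t^2/(4*((k:ℝ)*μ^4)) := by
          rw [div_le_div_iff₀ hα0 (by linarith : (0:ℝ) < 4*((k:ℝ)*μ^4))]
          have ht2 : t^2*α = (1-a)^2*α^3 := by rw [htdef]; ring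
          rw [ht2]
          have := mul_pos hβ hK
          linarith [hKh1]
        have hdouble : t^2/(2*((k:ℝ)*μ^4)) = 2 * (t^2/(4*((k:ℝ)*μ^4))) := by
          field_simp
          ring
        linarith
      have hfc : ((((Finset.powersetCard k Q).filter
          (fun I => α ≤ sincSq Φ I j)).card : ℝ)) ≤
          ((N-1).choose k : ℝ) * Real.exp (L * (k:ℝ) * S / ((N:ℝ)-1)
            + (k:ℝ) * L^2 * (μ^2)^2 - L * α) := by
        have hepos : (0:ℝ) < Real.exp (L * α) := Real.exp_pos _
        calc ((((Finset.powersetCard k Q).filter (fun I => α ≤ sincSq Φ I j)).card : ℝ))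
            ≤ (((N-1).choose k : ℝ) * Real.exp (L * (k:ℝ) * S / ((N:ℝ)-1)
                + (k:ℝ) * L^2 * (μ^2)^2)) / Real.exp (L * α) := (le_div_iff₀ hepos).2 h3
          _ = ((N-1).choose k : ℝ) * Real.exp (L * (k:ℝ) * S / ((N:ℝ)-1)
                + (k:ℝ) * L^2 * (μ^2)^2 - L * α) := by rw [Real.exp_sub]; ring
      calc ((((Finset.powersetCard k Q).filter (fun I => α ≤ sincSq Φ I j)).card : ℝ))
          ≤ ((N-1).choose k : ℝ) * Real.exp (L * (k:ℝ) * S / ((N:ℝ)-1)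
            + (k:ℝ) * L^2 * (μ^2)^2 - L * α) := hfc
        _ ≤ ((N-1).choose k : ℝ) * Real.exp (-(β/α)) := by
            refine mul_le_mul_of_nonneg_left (Real.exp_le_exp.2 hEbound) (Nat.cast_nonneg _)
        _ ≤ 2 * Real.exp (-β / α) * Cnk := by
            rw [neg_div, hCdef]
            have he := Real.exp_pos (-(β/α))
            have hc0 : (0:ℝ) ≤ (((N-1).choose k : ℕ) : ℝ) := Nat.cast_nonneg _
            nlinarith [mul_nonneg hc0 he.le]
  -- decompose the pair count by the second coordinate
  have hfib : ∀ (B : Finset (Finset (Fin N) × Fin N)), B ⊆ pairsFinset N k →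
      ∀ j : Fin N, (B.filter (fun p => p.2 = j)).card =
        ((Finset.powersetCard k ((univ : Finset (Fin N)).erase j)).filter
          (fun I => (I, j) ∈ B)).card := by
    intro B hB j
    refine Finset.card_nbij' (fun p => p.1) (fun I => (I, j)) ?_ ?_ ?_ ?_
    · intro p hp
      obtain ⟨hpB, hpj⟩ := Finset.mem_filter.1 hp
      have hpP := hB hpB
      simp only [pairsFinset, Finset.mem_filter, Finset.mem_product] at hpP
      obtain ⟨⟨hp1, _⟩, hp2⟩ := hpP
      rw [Finset.mem_powersetCard] at hp1
      rw [Finset.mem_coe, Finset.mem_filter, Finset.mem_powersetCard, Finset.subset_erase]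
      subst hpj
      exact ⟨⟨⟨hp1.1, hp2⟩, hp1.2⟩, by rwa [show (p.1, p.2) = p from rfl]⟩
    · intro I hI
      obtain ⟨_, hIB⟩ := Finset.mem_filter.1 hI
      exact Finset.mem_filter.2 ⟨hIB, rfl⟩
    · intro p hp
      obtain ⟨_, hpj⟩ := Finset.mem_filter.1 hp
      subst hpj
      rfl
    · intro I hI
      rfl
  set A := (pairsFinset N k).filter (fun p => α ≤ sincSq Φ p.1 p.2) with hAdef
  have hAsub : A ⊆ pairsFinset N k := Finset.filter_subset _ _
  have hA1 : A.card = ∑ j ∈ (univ : Finset (Fin N)), (A.filter (fun p => p.2 = j)).card :=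
    Finset.card_eq_sum_card_fiberwise (fun p _ => Finset.mem_univ p.2)
  have hP1 : (pairsFinset N k).card = ∑ j ∈ (univ : Finset (Fin N)),
      ((pairsFinset N k).filter (fun p => p.2 = j)).card :=
    Finset.card_eq_sum_card_fiberwise (fun p _ => Finset.mem_univ p.2)
  have hAfib : ∀ j : Fin N, (A.filter (fun p => p.2 = j)).card =
      ((Finset.powersetCard k ((univ : Finset (Fin N)).erase j)).filter
        (fun I => α ≤ sincSq Φ I j)).card := by
    intro j
    rw [hfib A hAsub j]
    congr 1
    refine Finset.filter_congr fun I hI => ?_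
    rw [Finset.mem_powersetCard, Finset.subset_erase] at hI
    obtain ⟨⟨hIu, hjI⟩, hIc⟩ := hI
    simp only [hAdef, pairsFinset, Finset.mem_filter, Finset.mem_product,
      Finset.mem_powersetCard]
    simp [hIu, hjI, hIc]
  have hPfib : ∀ j : Fin N, ((pairsFinset N k).filter (fun p => p.2 = j)).card =
      (N-1).choose k := by
    intro j
    rw [hfib _ (Finset.Subset.refl _) j]
    have hall : (Finset.powersetCard k ((univ : Finset (Fin N)).erase j)).filter
        (fun I => (I, j) ∈ pairsFinset N k) =
        Finset.powersetCard k ((univ : Finset (Fin N)).erase j) := by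
      refine Finset.filter_true_of_mem fun I hI => ?_
      rw [Finset.mem_powersetCard, Finset.subset_erase] at hI
      simp only [pairsFinset, Finset.mem_filter, Finset.mem_product, Finset.mem_powersetCard]
      exact ⟨⟨⟨hI.1.1, hI.2⟩, Finset.mem_univ j⟩, hI.1.2⟩
    rw [hall, Finset.card_powersetCard, Finset.card_erase_of_mem (Finset.mem_univ j),
      Finset.card_univ, Fintype.card_fin]
  have hPn : (pairsFinset N k).card = N * (N-1).choose k := by
    rw [hP1, Finset.sum_congr rfl fun j _ => hPfib j, Finset.sum_const, Finset.card_univ,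
      Fintype.card_fin, smul_eq_mul]
  have hAn : A.card = ∑ j ∈ (univ : Finset (Fin N)),
      ((Finset.powersetCard k ((univ : Finset (Fin N)).erase j)).filter
        (fun I => α ≤ sincSq Φ I j)).card := by
    rw [hA1]; exact Finset.sum_congr rfl fun j _ => hAfib j
  calc (A.card : ℝ)
      = ∑ j : Fin N, (((Finset.powersetCard k ((univ : Finset (Fin N)).erase j)).filter
          (fun I => α ≤ sincSq Φ I j)).card : ℝ) := by rw [hAn]; push_cast; rfl
    _ ≤ ∑ _j : Fin N, 2 * Real.exp (-β/α) * Cnk := Finset.sum_le_sum fun j _ => main j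
    _ = (N:ℝ) * (2 * Real.exp (-β/α) * Cnk) := by
        rw [Finset.sum_const, Finset.card_univ, Fintype.card_fin, nsmul_eq_mul]
    _ = 2 * Real.exp (-β/α) * ((pairsFinset N k).card : ℝ) := by
        rw [hPn, hCdef]; push_cast; ring
end
end

section
/- Let Φ have coherence μ and let θ = μ̄² if Φ is coherence-invariant and θ = μ̄²_max otherwise; assume k < N/2 − 1. If θ ≤ a·δ²/k² and μ⁴ ≤ (1−a)²·δ⁴/(32·k³·log(2k/ε₁)) for some constant 0 < a < 1, then Φ is (k,δ,ε₁)-StRIP. -/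
open Finset Matrix

open scoped Classical

noncomputable section

variable {m N : ℕ}

lemma aux_exp_le {u : ℝ} (h0 : 0 ≤ u) (h1 : u ≤ 1) : Real.exp u ≤ 1 + u + u ^ 2 := by
  have h := Real.exp_bound' h0 h1 (n := 2) (by norm_num)
  rw [Finset.sum_range_succ, Finset.sum_range_one] at h
  norm_num at h
  nlinarith [sq_nonneg u]

lemma step_mgf {ι : Type*} (A : Finset ι) (c : ι → ℝ) (M s : ℝ)
    (hs : 0 ≤ s) (hsM : s * M ≤ 1) (hc : ∀ j ∈ A, 0 ≤ c j ∧ c j ≤ M) :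
    ∑ j ∈ A, Real.exp (s * c j) ≤
      (A.card : ℝ) * Real.exp (s * ((∑ j ∈ A, c j) / A.card) + s ^ 2 * M ^ 2) := by
  rcases A.eq_empty_or_nonempty with rfl | hA
  · simp
  obtain ⟨j₀, hj₀⟩ := hA
  have hM : 0 ≤ M := le_trans (hc j₀ hj₀).1 (hc j₀ hj₀).2
  have hn : (0:ℝ) < A.card := by
    exact_mod_cast Finset.card_pos.2 ⟨j₀, hj₀⟩
  rcases eq_or_lt_of_le hM with hM0 | hMpos
  · -- M = 0 : all c j = 0
    have hc0 : ∀ j ∈ A, c j = 0 := fun j hj => le_antisymm (hM0 ▸ (hc j hj).2) (hc j hj).1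
    have e1 : ∑ j ∈ A, Real.exp (s * c j) = A.card := by
      rw [Finset.sum_congr rfl (fun j hj => by rw [hc0 j hj, mul_zero, Real.exp_zero])]
      simp
    have e2 : ∑ j ∈ A, c j = 0 := Finset.sum_eq_zero hc0
    rw [e1, e2]
    simp [← hM0]
  · -- chord bound
    set T := ∑ j ∈ A, c j with hT
    have hTnn : 0 ≤ T := Finset.sum_nonneg fun j hj => (hc j hj).1
    have hTle : T ≤ A.card * M := by
      calc T ≤ ∑ _j ∈ A, M := Finset.sum_le_sum fun j hj => (hc j hj).2
        _ = A.card * M := by rw [Finset.sum_const, nsmul_eq_mul]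
    have hchord : ∀ j ∈ A, Real.exp (s * c j) ≤ 1 + (c j / M) * (Real.exp (s * M) - 1) := by
      intro j hj
      have ht0 : 0 ≤ c j / M := div_nonneg (hc j hj).1 hM
      have ht1 : c j / M ≤ 1 := (div_le_one hMpos).2 (hc j hj).2
      have hcx := convexOn_exp.2 (Set.mem_univ (0:ℝ)) (Set.mem_univ (s*M))
        (show (0:ℝ) ≤ 1 - c j / M by linarith) ht0
        (show (1 - c j / M) + c j / M = 1 by ring)
      simp only [smul_eq_mul, mul_zero, zero_add, Real.exp_zero, mul_one] at hcx
      have harg : c j / M * (s * M) = s * c j := by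
        field_simp
      rw [harg] at hcx
      linarith
    have hsum1 : ∑ j ∈ A, Real.exp (s * c j) ≤ A.card + (T / M) * (Real.exp (s*M) - 1) := by
      calc ∑ j ∈ A, Real.exp (s * c j) ≤ ∑ j ∈ A, (1 + (c j / M) * (Real.exp (s * M) - 1)) :=
            Finset.sum_le_sum hchord
        _ = A.card + (T / M) * (Real.exp (s*M) - 1) := by
            rw [Finset.sum_add_distrib, Finset.sum_const, ← Finset.sum_mul, ← Finset.sum_div]
            simp [hT]
    have hE : Real.exp (s*M) - 1 ≤ s*M + (s*M)^2 := by
      have := aux_exp_le (mul_nonneg hs hM) hsM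
      linarith
    have hsum2 : (T / M) * (Real.exp (s*M) - 1) ≤ s * T + s^2 * M * T := by
      have h1 : (T / M) * (Real.exp (s*M) - 1) ≤ (T / M) * (s*M + (s*M)^2) :=
        mul_le_mul_of_nonneg_left hE (div_nonneg hTnn hM)
      have h2 : (T / M) * (s*M + (s*M)^2) = s * T + s^2 * M * T := by
        field_simp
      linarith
    have hrhs : (A.card : ℝ) + s * T + s^2 * M^2 * A.card ≤
        (A.card : ℝ) * Real.exp (s * (T / A.card) + s ^ 2 * M ^ 2) := by
      have h3 : 1 + (s * (T / A.card) + s^2*M^2) ≤ Real.exp (s * (T / A.card) + s ^ 2 * M ^ 2) := by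
        have := Real.add_one_le_exp (s * (T / A.card) + s ^ 2 * M ^ 2)
        linarith
      have h4 : (A.card:ℝ) * (1 + (s * (T / A.card) + s^2*M^2)) = A.card + s*T + s^2*M^2*A.card := by
        field_simp
        ring
      calc (A.card : ℝ) + s * T + s^2 * M^2 * A.card = (A.card:ℝ) * (1 + (s * (T / A.card) + s^2*M^2)) := h4.symm
        _ ≤ (A.card : ℝ) * Real.exp (s * (T / A.card) + s ^ 2 * M ^ 2) :=
            mul_le_mul_of_nonneg_left h3 (le_of_lt hn)
    have hmid : s^2 * M * T ≤ s^2 * M^2 * A.card := by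
      have : s^2 * M * T ≤ s^2 * M * (A.card * M) :=
        mul_le_mul_of_nonneg_left hTle (by positivity)
      calc s^2*M*T ≤ s^2*M*(A.card*M) := this
        _ = s^2*M^2*A.card := by ring
    linarith


lemma insert_identity {ι : Type*} [DecidableEq ι] (A : Finset ι) (r : ℕ) (g : Finset ι → ℝ) :
    ∑ j ∈ A, ∑ S ∈ Finset.powersetCard r (A.erase j), g (insert j S)
      = (r + 1 : ℝ) * ∑ S ∈ Finset.powersetCard (r+1) A, g S := by
  have h1 : ∀ j ∈ A, ∑ S ∈ Finset.powersetCard r (A.erase j), g (insert j S)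
      = ∑ S ∈ (Finset.powersetCard (r+1) A).filter (fun S => j ∈ S), g S := by
    intro j hj
    refine Finset.sum_bij' (fun S _ => insert j S) (fun S _ => S.erase j) ?_ ?_ ?_ ?_ ?_
    · intro S hS
      obtain ⟨hsub, hcard⟩ := Finset.mem_powersetCard.1 hS
      have hjS : j ∉ S := fun h => (Finset.mem_erase.1 (hsub h)).1 rfl
      rw [Finset.mem_filter, Finset.mem_powersetCard]
      refine ⟨⟨?_, ?_⟩, Finset.mem_insert_self _ _⟩
      · intro x hx
        rcases Finset.mem_insert.1 hx with rfl | hx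
        · exact hj
        · exact (Finset.mem_erase.1 (hsub hx)).2
      · rw [Finset.card_insert_of_notMem hjS, hcard]
    · intro S hS
      rw [Finset.mem_filter, Finset.mem_powersetCard] at hS
      obtain ⟨⟨hsub, hcard⟩, hjS⟩ := hS
      rw [Finset.mem_powersetCard]
      constructor
      · exact Finset.erase_subset_erase _ hsub
      · rw [Finset.card_erase_of_mem hjS, hcard]
        simp
    · intro S hS
      obtain ⟨hsub, _⟩ := Finset.mem_powersetCard.1 hS
      have hjS : j ∉ S := fun h => (Finset.mem_erase.1 (hsub h)).1 rfl
      exact Finset.erase_insert hjS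
    · intro S hS
      rw [Finset.mem_filter] at hS
      exact Finset.insert_erase hS.2
    · intro S _
      rfl
  rw [Finset.sum_congr rfl h1]
  simp only [Finset.sum_filter]
  rw [Finset.sum_comm]
  have h2 : ∀ S ∈ Finset.powersetCard (r+1) A,
      (∑ j ∈ A, if j ∈ S then g S else 0) = (r+1 : ℝ) * g S := by
    intro S hS
    obtain ⟨hsub, hcard⟩ := Finset.mem_powersetCard.1 hS
    rw [← Finset.sum_filter]
    have : A.filter (fun j => j ∈ S) = S := by
      ext x
      simp only [Finset.mem_filter]
      exact ⟨fun h => h.2, fun h => ⟨hsub h, h⟩⟩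
    rw [this, Finset.sum_const, hcard, nsmul_eq_mul]
    push_cast
    ring
  rw [Finset.sum_congr rfl h2, ← Finset.mul_sum]

lemma chernoff_sum {ι : Type*} [DecidableEq ι] (c : ι → ℝ) (M l : ℝ)
    (hl : 0 ≤ l) (hlM : l * M ≤ 1) :
    ∀ (r : ℕ) (A : Finset ι), (∀ j ∈ A, 0 ≤ c j ∧ c j ≤ M) →
    ∑ S ∈ Finset.powersetCard r A, Real.exp (l * ∑ j ∈ S, c j) ≤
      (A.card.choose r : ℝ) *
        Real.exp (l * r * ((∑ j ∈ A, c j) / A.card) + r * l ^ 2 * M ^ 2) := by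
  intro r
  induction r with
  | zero =>
    intro A hc
    simp [Finset.powersetCard_zero]
  | succ r IH =>
    intro A hc
    rcases lt_or_ge A.card (r+1) with hn | hn
    · rw [Finset.powersetCard_eq_empty.2 hn, Nat.choose_eq_zero_of_lt hn]
      simp
    · -- A nonempty, card =: n ≥ r+1
      have hA : A.Nonempty := Finset.card_pos.1 (lt_of_lt_of_le (Nat.succ_pos r) hn)
      obtain ⟨j₀, hj₀⟩ := hA
      have hM : 0 ≤ M := le_trans (hc j₀ hj₀).1 (hc j₀ hj₀).2
      set n : ℕ := A.card with hn_def
      have hn1 : 1 ≤ n := le_trans (Nat.succ_le_succ (Nat.zero_le r)) hn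
      have hnR : (0:ℝ) < n := by exact_mod_cast hn1
      set T := ∑ j ∈ A, c j with hT
      -- the key identity
      have hkey : (r + 1 : ℝ) * ∑ S ∈ Finset.powersetCard (r+1) A, Real.exp (l * ∑ j ∈ S, c j)
          = ∑ j ∈ A, ∑ S ∈ Finset.powersetCard r (A.erase j),
              Real.exp (l * c j) * Real.exp (l * ∑ x ∈ S, c x) := by
        rw [← insert_identity A r (fun S => Real.exp (l * ∑ j ∈ S, c j))]
        refine Finset.sum_congr rfl fun j hj => Finset.sum_congr rfl fun S hS => ?_
        obtain ⟨hsub, _⟩ := Finset.mem_powersetCard.1 hS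
        have hjS : j ∉ S := fun h => (Finset.mem_erase.1 (hsub h)).1 rfl
        rw [Finset.sum_insert hjS, ← Real.exp_add]
        ring_nf
      -- bound each inner sum via IH
      set m : ℕ := n - 1 with hm_def
      have hmn : n = m + 1 := (Nat.succ_pred_eq_of_pos hn1).symm
      have hrm : r ≤ m := by omega
      have hcardE : ∀ j ∈ A, (A.erase j).card = m := fun j hj => by
        rw [Finset.card_erase_of_mem hj]
      obtain ⟨s, hs_def⟩ : ∃ s : ℝ, s = l - l * (r:ℝ) / (m:ℝ) := ⟨_, rfl⟩
      have hdiv_le : l * r / m ≤ l := by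
        rcases Nat.eq_zero_or_pos r with rfl | hr
        · simp [hl]
        · have hmR : (0:ℝ) < m := by exact_mod_cast lt_of_lt_of_le hr hrm
          rw [div_le_iff₀ hmR]
          have hrmR : (r:ℝ) ≤ (m:ℝ) := by exact_mod_cast hrm
          nlinarith
      have hdiv_nn : 0 ≤ l * r / m := by positivity
      have hs0 : 0 ≤ s := by rw [hs_def, sub_nonneg]; exact hdiv_le
      have hsl : s ≤ l := by rw [hs_def]; linarith
      have hsM : s * M ≤ 1 := le_trans (mul_le_mul_of_nonneg_right hsl hM) hlM
      have hIH : ∀ j ∈ A, ∑ S ∈ Finset.powersetCard r (A.erase j), Real.exp (l * ∑ x ∈ S, c x)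
          ≤ (m.choose r : ℝ) * Real.exp (l * r * ((T - c j) / m) + r * l ^ 2 * M ^ 2) := by
        intro j hj
        have h := IH (A.erase j) (fun x hx => hc x (Finset.mem_of_mem_erase hx))
        rw [hcardE j hj, Finset.sum_erase_eq_sub hj] at h
        exact h
      -- combine
      have hterm : ∀ j : ι, Real.exp (l * c j) *
            Real.exp (l * ↑r * ((T - c j) / ↑m) + ↑r * l ^ 2 * M ^ 2)
          = Real.exp ((r:ℝ) * l ^ 2 * M ^ 2) * Real.exp (l * ↑r * (T / ↑m)) *
            Real.exp (s * c j) := by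
        intro j
        rw [← Real.exp_add, ← Real.exp_add, ← Real.exp_add]
        congr 1
        rw [hs_def, sub_div]
        ring
      have hstep : ∑ j ∈ A, Real.exp (s * c j) ≤
          (n : ℝ) * Real.exp (s * (T / n) + s ^ 2 * M ^ 2) :=
        step_mgf A c M s hs0 hsM hc
      have hmain : (r + 1 : ℝ) * ∑ S ∈ Finset.powersetCard (r+1) A, Real.exp (l * ∑ j ∈ S, c j)
          ≤ (m.choose r : ℝ) * Real.exp (r * l^2 * M^2) * Real.exp (l * r * (T / m)) *
            ((n:ℝ) * Real.exp (s * (T / n) + s ^ 2 * M ^ 2)) := by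
        rw [hkey]
        calc ∑ j ∈ A, ∑ S ∈ Finset.powersetCard r (A.erase j),
              Real.exp (l * c j) * Real.exp (l * ∑ x ∈ S, c x)
            ≤ ∑ j ∈ A, Real.exp (l * c j) *
              ((m.choose r : ℝ) * Real.exp (l * r * ((T - c j) / m) + r * l ^ 2 * M ^ 2)) := by
              refine Finset.sum_le_sum fun j hj => ?_
              rw [← Finset.mul_sum]
              exact mul_le_mul_of_nonneg_left (hIH j hj) (Real.exp_nonneg _)
          _ = (m.choose r : ℝ) * Real.exp (r * l^2 * M^2) * Real.exp (l * r * (T / m)) *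
                ∑ j ∈ A, Real.exp (s * c j) := by
              rw [Finset.mul_sum]
              refine Finset.sum_congr rfl fun j hj => ?_
              calc Real.exp (l * c j) * ((m.choose r : ℝ) *
                    Real.exp (l * ↑r * ((T - c j) / ↑m) + ↑r * l ^ 2 * M ^ 2))
                  = (m.choose r : ℝ) * (Real.exp (l * c j) *
                    Real.exp (l * ↑r * ((T - c j) / ↑m) + ↑r * l ^ 2 * M ^ 2)) := by ring
                _ = _ := by rw [hterm j]; ring
          _ ≤ _ := mul_le_mul_of_nonneg_left hstep (by positivity)
      -- exponent comparison
      have hexp : (m.choose r : ℝ) * Real.exp (r * l^2 * M^2) * Real.exp (l * r * (T / m)) *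
            ((n:ℝ) * Real.exp (s * (T / n) + s ^ 2 * M ^ 2))
          ≤ (r+1 : ℝ) * ((n.choose (r+1) : ℝ) *
              Real.exp (l * (r+1) * (T / n) + (r+1) * l ^ 2 * M ^ 2)) := by
        have hcount : (n:ℝ) * (m.choose r : ℝ) = (r+1 : ℝ) * (n.choose (r+1) : ℝ) := by
          have h := Nat.add_one_mul_choose_eq m r
          have h2 : n * m.choose r = n.choose (r+1) * (r+1) := by
            rw [hmn]; simpa using h
          have h3 := congrArg (Nat.cast (R := ℝ)) h2
          push_cast at h3
          linarith
        have hexparg : l * r * (T / m) + (s * (T / n) + s ^ 2 * M ^ 2) + r * l^2 * M^2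
            ≤ l * (r+1) * (T / n) + (r+1) * l ^ 2 * M ^ 2 := by
          have hlin : l * r * (T / m) + s * (T / n) = l * (r+1) * (T / n) := by
            rcases Nat.eq_zero_or_pos r with rfl | hr
            · simp [hs_def]
            · have hmR : (0:ℝ) < m := by exact_mod_cast lt_of_lt_of_le hr hrm
              have hnm : (n:ℝ) = (m:ℝ) + 1 := by exact_mod_cast hmn
              rw [hs_def, hnm]
              field_simp
              ring
          have hsq : s^2 * M^2 ≤ l^2 * M^2 :=
            mul_le_mul_of_nonneg_right (pow_le_pow_left₀ hs0 hsl 2) (by positivity)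
          have hq2 : s ^ 2 * M ^ 2 + (r:ℝ) * l ^ 2 * M ^ 2 ≤ ((r:ℝ) + 1) * l ^ 2 * M ^ 2 := by
            have hexpand : ((r:ℝ)+1) * l^2*M^2 = (r:ℝ)*l^2*M^2 + l^2*M^2 := by ring
            rw [hexpand]
            linarith
          linarith [hlin, hq2]
        calc (m.choose r : ℝ) * Real.exp (r * l^2 * M^2) * Real.exp (l * r * (T / m)) *
              ((n:ℝ) * Real.exp (s * (T / n) + s ^ 2 * M ^ 2))
            = ((n:ℝ) * (m.choose r : ℝ)) *
              Real.exp (l * r * (T / m) + (s * (T / n) + s ^ 2 * M ^ 2) + r * l^2 * M^2) := by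
              rw [show (m.choose r : ℝ) * Real.exp ((r:ℝ) * l^2 * M^2) *
                    Real.exp (l * (r:ℝ) * (T / (m:ℝ))) *
                    ((n:ℝ) * Real.exp (s * (T / (n:ℝ)) + s ^ 2 * M ^ 2))
                  = ((n:ℝ) * (m.choose r : ℝ)) * (Real.exp (l * (r:ℝ) * (T / (m:ℝ))) *
                    Real.exp (s * (T / (n:ℝ)) + s ^ 2 * M ^ 2) *
                    Real.exp ((r:ℝ) * l^2 * M^2)) from by ring]
              rw [← Real.exp_add, ← Real.exp_add]
          _ ≤ ((n:ℝ) * (m.choose r : ℝ)) *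
              Real.exp (l * (r+1) * (T / n) + (r+1) * l ^ 2 * M ^ 2) := by
              apply mul_le_mul_of_nonneg_left (Real.exp_le_exp.2 hexparg) (mul_nonneg (Nat.cast_nonneg _) (Nat.cast_nonneg _))
          _ = _ := by rw [hcount]; ring
      have hfin := le_trans hmain hexp
      have hr1 : (0:ℝ) < (r+1 : ℝ) := by positivity
      have := (mul_le_mul_iff_right₀ hr1).1 hfin
      exact_mod_cast this


lemma chernoff_count {ι : Type*} [DecidableEq ι] (c : ι → ℝ) (M l v : ℝ)
    (hl : 0 ≤ l) (hlM : l * M ≤ 1) (r : ℕ) (A : Finset ι)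
    (hc : ∀ j ∈ A, 0 ≤ c j ∧ c j ≤ M) :
    (((Finset.powersetCard r A).filter (fun S => v < ∑ j ∈ S, c j)).card : ℝ)
      * Real.exp (l * v) ≤
    (A.card.choose r : ℝ) *
      Real.exp (l * r * ((∑ j ∈ A, c j) / A.card) + r * l ^ 2 * M ^ 2) := by
  have h1 : (((Finset.powersetCard r A).filter (fun S => v < ∑ j ∈ S, c j)).card : ℝ)
      * Real.exp (l * v)
      ≤ ∑ S ∈ (Finset.powersetCard r A).filter (fun S => v < ∑ j ∈ S, c j),
          Real.exp (l * ∑ j ∈ S, c j) := by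
    rw [← nsmul_eq_mul]
    apply Finset.card_nsmul_le_sum
    intro S hS
    have := (Finset.mem_filter.1 hS).2
    exact Real.exp_le_exp.2 (mul_le_mul_of_nonneg_left this.le hl)
  have h2 : ∑ S ∈ (Finset.powersetCard r A).filter (fun S => v < ∑ j ∈ S, c j),
        Real.exp (l * ∑ j ∈ S, c j)
      ≤ ∑ S ∈ Finset.powersetCard r A, Real.exp (l * ∑ j ∈ S, c j) :=
    Finset.sum_le_sum_of_subset_of_nonneg (Finset.filter_subset _ _)
      (fun _ _ _ => Real.exp_nonneg _)
  exact le_trans h1 (le_trans h2 (chernoff_sum c M l hl hlM r A hc))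

lemma specNorm_le_frobenius {α β : Type*} [Fintype α] [Fintype β] (A : Matrix α β ℝ) :
    specNorm A ≤ Real.sqrt (∑ i, ∑ j, A i j ^ 2) := by
  apply Real.sSup_le _ (Real.sqrt_nonneg _)
  rintro t ⟨x, hx, rfl⟩
  apply Real.sqrt_le_sqrt
  calc ∑ i, (∑ j, A i j * x j) ^ 2
      ≤ ∑ i, (∑ j, A i j ^ 2) * ∑ j, x j ^ 2 :=
        Finset.sum_le_sum fun i _ => Finset.sum_mul_sq_le_sq_mul_sq _ _ _
    _ ≤ ∑ i, (∑ j, A i j ^ 2) * 1 := by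
        refine Finset.sum_le_sum fun i _ => ?_
        exact mul_le_mul_of_nonneg_left hx (Finset.sum_nonneg fun j _ => sq_nonneg _)
    _ = ∑ i, ∑ j, A i j ^ 2 := by simp

lemma ip_symm (Φ : Matrix (Fin m) (Fin N) ℝ) (i j : Fin N) : ip Φ i j = ip Φ j i := by
  unfold ip
  exact Finset.sum_congr rfl fun r _ => mul_comm _ _

lemma gram_entry (Φ : Matrix (Fin m) (Fin N) ℝ) (I : Finset (Fin N))
    (i j : {x // x ∈ I}) : gram Φ I i j = ip Φ (i : Fin N) (j : Fin N) := by
  unfold _root_.gram colSub ip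
  rw [Matrix.mul_apply]
  rfl

lemma frob_gram (Φ : Matrix (Fin m) (Fin N) ℝ) (I : Finset (Fin N))
    (hcols : unitCols Φ) :
    ∑ i : {x // x ∈ I}, ∑ j : {x // x ∈ I}, ((gram Φ I - 1) i j) ^ 2
      = ∑ i ∈ I, ∑ j ∈ I.erase i, (ip Φ i j) ^ 2 := by
  have hent : ∀ i j : {x // x ∈ I}, ((gram Φ I - 1) i j) ^ 2
      = (if (i : Fin N) = (j : Fin N) then 0 else ip Φ (i : Fin N) (j : Fin N)) ^ 2 := by
    intro i j
    rw [Matrix.sub_apply, gram_entry, Matrix.one_apply]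
    by_cases h : i = j
    · subst h
      simp only [if_pos rfl]
      have : ip Φ (i : Fin N) (i : Fin N) = 1 := by
        unfold ip
        rw [← hcols (i : Fin N)]
        exact Finset.sum_congr rfl fun r _ => (sq (Φ r i)).symm
      rw [this]
      norm_num
    · have h' : (i : Fin N) ≠ (j : Fin N) := fun hc => h (Subtype.ext hc)
      rw [if_neg h, if_neg h']
      ring
  calc ∑ i : {x // x ∈ I}, ∑ j : {x // x ∈ I}, ((gram Φ I - 1) i j) ^ 2
      = ∑ i : {x // x ∈ I}, ∑ j : {x // x ∈ I},
          (if (i : Fin N) = (j : Fin N) then 0 else ip Φ (i : Fin N) (j : Fin N)) ^ 2 := by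
        exact Finset.sum_congr rfl fun i _ => Finset.sum_congr rfl fun j _ => hent i j
    _ = ∑ i ∈ I, ∑ j ∈ I, (if i = j then 0 else ip Φ i j) ^ 2 := by
        rw [← Finset.sum_coe_sort I (fun i => ∑ j ∈ I, (if i = j then 0 else ip Φ i j) ^ 2)]
        refine Finset.sum_congr rfl fun i _ => ?_
        rw [← Finset.sum_coe_sort I (fun j => (if (i:Fin N) = j then 0 else ip Φ i j) ^ 2)]
    _ = ∑ i ∈ I, ∑ j ∈ I.erase i, (ip Φ i j) ^ 2 := by
        refine Finset.sum_congr rfl fun i hi => ?_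
        rw [← Finset.add_sum_erase I _ hi, if_pos rfl]
        rw [zero_pow (by norm_num), zero_add]
        refine Finset.sum_congr rfl fun j hj => ?_
        rw [if_neg (Ne.symm (Finset.mem_erase.1 hj).1)]

lemma good_of_event (Φ : Matrix (Fin m) (Fin N) ℝ) (hcols : unitCols Φ)
    {δ : ℝ} (hδ : 0 ≤ δ) {k : ℕ} (I : Finset (Fin N)) (hI : I.card = k)
    (hev : ∀ i ∈ I, ∑ j ∈ I.erase i, (ip Φ i j) ^ 2 ≤ δ ^ 2 / k) :
    specNorm (gram Φ I - 1) ≤ δ := by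
  refine le_trans (specNorm_le_frobenius _) ?_
  rw [show δ = Real.sqrt (δ ^ 2) from (Real.sqrt_sq hδ).symm]
  apply Real.sqrt_le_sqrt
  rw [frob_gram Φ I hcols]
  rcases Nat.eq_zero_or_pos k with hk0 | hk
  · have : I = ∅ := Finset.card_eq_zero.1 (hk0 ▸ hI)
    subst this
    simp [sq_nonneg δ]
  · have hkR : (0:ℝ) < k := by exact_mod_cast hk
    calc ∑ i ∈ I, ∑ j ∈ I.erase i, (ip Φ i j) ^ 2 ≤ ∑ _i ∈ I, δ ^ 2 / k :=
          Finset.sum_le_sum hev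
      _ = k * (δ ^ 2 / k) := by rw [Finset.sum_const, hI, nsmul_eq_mul]
      _ = δ ^ 2 := by field_simp

set_option maxHeartbeats 2000000 in
/-- Corollary: coherence conditions implying StRIP. -/
theorem stmt12 (m N k : ℕ) (hk : (k : ℝ) < N / 2 - 1)
    (δ ε₁ a μ θ : ℝ) (hδ : 0 < δ) (hε0 : 0 < ε₁) (hε1 : ε₁ < 1) (ha0 : 0 < a) (ha1 : a < 1)
    (Φ : Matrix (Fin m) (Fin N) ℝ) (hcols : unitCols Φ)
    (hμ : ∀ i j : Fin N, i ≠ j → |ip Φ i j| ≤ μ)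
    (hθ : (CoherenceInvariant Φ ∧ θ = mu2bar Φ) ∨ θ = mu2max Φ)
    (h1 : θ ≤ a * δ ^ 2 / k ^ 2)
    (h2 : μ ^ 4 ≤ (1 - a) ^ 2 * δ ^ 4 / (32 * k ^ 3 * Real.log (2 * k / ε₁))) :
    StRIP Φ k δ ε₁ := by
  classical
  have hδ0 : 0 ≤ δ := hδ.le
  -- basic size facts
  have hkNR : (k : ℝ) < (N : ℝ) / 2 - 1 := hk
  have hNR2 : (2 : ℝ) < (N : ℝ) := by
    have : (0:ℝ) ≤ (k:ℝ) := Nat.cast_nonneg k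
    nlinarith
  have hN2 : 2 < N := by exact_mod_cast hNR2
  have hN1pos : (0:ℝ) < (N:ℝ) - 1 := by linarith
  have hNpos : (0:ℝ) < (N:ℝ) := by linarith
  -- μ is nonnegative
  have hμ0 : 0 ≤ μ := by
    have h01 : (⟨0, by omega⟩ : Fin N) ≠ (⟨1, by omega⟩ : Fin N) := by
      intro h
      simpa using congrArg Fin.val h
    exact le_trans (abs_nonneg _) (hμ _ _ h01)
  -- row sums and the θ bound
  set R : Fin N → ℝ := fun i => ∑ j ∈ (univ : Finset (Fin N)).erase i, (ip Φ i j) ^ 2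
    with hR_def
  have hRnn : ∀ i, 0 ≤ R i := fun i => Finset.sum_nonneg fun j _ => sq_nonneg _
  have hrow : ∀ i : Fin N, R i ≤ ((N:ℝ) - 1) * θ := by
    have hflip : ∀ j : Fin N,
        (∑ i ∈ (univ : Finset (Fin N)).erase j, (ip Φ i j) ^ 2) = R j := by
      intro j
      exact Finset.sum_congr rfl fun x _ => by rw [ip_symm]
    rcases hθ with ⟨hinv, hbar⟩ | hmax
    · -- coherence invariant case: all rows are equal
      have hRmap : ∀ i : Fin N, R i =
          (Multiset.map (fun x => x ^ 2)
            (Multiset.map (fun j => |ip Φ i j|) ((univ : Finset (Fin N)).erase i).val)).sum := by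
        intro i
        rw [Multiset.map_map]
        rw [show R i = ∑ j ∈ (univ : Finset (Fin N)).erase i, (ip Φ i j) ^ 2 from rfl,
          Finset.sum_eq_multiset_sum]
        congr 1
        apply Multiset.map_congr rfl
        intro x _
        simp [Function.comp, sq_abs]
      have hRconst : ∀ i i' : Fin N, R i = R i' := by
        intro i i'
        rw [hRmap i, hRmap i', hinv i i']
      intro i
      have hsum : (∑ i', ∑ j ∈ (univ : Finset (Fin N)).erase i', (ip Φ i' j) ^ 2)
          = (N : ℝ) * R i := by
        have : ∀ i' : Fin N, (∑ j ∈ (univ : Finset (Fin N)).erase i', (ip Φ i' j) ^ 2) = R i :=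
          fun i' => hRconst i' i
        rw [Finset.sum_congr rfl fun i' _ => this i']
        rw [Finset.sum_const, Finset.card_univ, Fintype.card_fin, nsmul_eq_mul]
      have hbar' : θ = (N : ℝ) * R i / ((N : ℝ) * ((N : ℝ) - 1)) := by
        rw [hbar]
        unfold mu2bar
        rw [hsum]
      rw [hbar']
      have hNne : (N:ℝ) ≠ 0 := ne_of_gt hNpos
      have hN1ne : (N:ℝ) - 1 ≠ 0 := ne_of_gt hN1pos
      apply le_of_eq
      field_simp
    · -- max case
      intro i
      have hset : {t : ℝ | ∃ j : Fin N,
          t = (∑ i' ∈ (univ : Finset (Fin N)).erase j, (ip Φ i' j) ^ 2) / ((N : ℝ) - 1)}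
          = Set.range (fun j : Fin N => R j / ((N:ℝ) - 1)) := by
        ext t
        simp only [Set.mem_setOf_eq, Set.mem_range]
        constructor
        · rintro ⟨j, rfl⟩
          exact ⟨j, by rw [hflip j]⟩
        · rintro ⟨j, rfl⟩
          exact ⟨j, by rw [hflip j]⟩
      have hθge : R i / ((N:ℝ) - 1) ≤ θ := by
        rw [hmax]
        unfold mu2max
        rw [hset]
        exact le_csSup (Set.Finite.bddAbove (Set.finite_range _)) (Set.mem_range_self i)
      calc R i = (R i / ((N:ℝ) - 1)) * ((N:ℝ) - 1) := by field_simp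
        _ ≤ θ * ((N:ℝ) - 1) := mul_le_mul_of_nonneg_right hθge hN1pos.le
        _ = ((N:ℝ) - 1) * θ := mul_comm _ _
  have hθnn : 0 ≤ θ := by
    have h0 := hrow ⟨0, by omega⟩
    have h1 := hRnn ⟨0, by omega⟩
    nlinarith
  -- abbreviations
  set P := Finset.powersetCard k (univ : Finset (Fin N)) with hP_def
  set ev : Finset (Fin N) → Prop :=
    fun I => ∀ i ∈ I, ∑ j ∈ I.erase i, (ip Φ i j) ^ 2 ≤ δ ^ 2 / k with hev_def
  have hsub : P.filter ev ⊆ P.filter (fun I => specNorm (gram Φ I - 1) ≤ δ) := by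
    intro I hI
    rw [Finset.mem_filter] at hI ⊢
    exact ⟨hI.1, good_of_event Φ hcols hδ0 I ((Finset.mem_powersetCard.1 hI.1).2) hI.2⟩
  have hcard_mono : ((P.filter ev).card : ℝ)
      ≤ ((P.filter (fun I => specNorm (gram Φ I - 1) ≤ δ)).card : ℝ) := by
    exact_mod_cast Finset.card_le_card hsub
  rw [StRIP]
  refine le_trans ?_ hcard_mono
  -- main case split
  by_cases hdet : 2 * (k:ℝ) ^ 2 * μ ^ 2 < (1 - a) * δ ^ 2
  · -- deterministic case: every k-subset satisfies the event
    have hall : ∀ I ∈ P, ev I := by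
      intro I hIP i hiI
      obtain ⟨hIsub, hIcard⟩ := Finset.mem_powersetCard.1 hIP
      have hkpos : 0 < k := hIcard ▸ Finset.card_pos.2 ⟨i, hiI⟩
      have hkR : (0:ℝ) < (k:ℝ) := by exact_mod_cast hkpos
      have hterm : ∀ j ∈ I.erase i, (ip Φ i j) ^ 2 ≤ μ ^ 2 := by
        intro j hj
        have hne : i ≠ j := fun h => (Finset.mem_erase.1 hj).1 h.symm
        calc (ip Φ i j) ^ 2 = |ip Φ i j| ^ 2 := (sq_abs _).symm
          _ ≤ μ ^ 2 := pow_le_pow_left₀ (abs_nonneg _) (hμ i j hne) 2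
      have hsum : ∑ j ∈ I.erase i, (ip Φ i j) ^ 2 ≤ (k:ℝ) * μ ^ 2 := by
        calc ∑ j ∈ I.erase i, (ip Φ i j) ^ 2
            ≤ (I.erase i).card • μ ^ 2 := Finset.sum_le_card_nsmul _ _ _ hterm
          _ = ((I.erase i).card : ℝ) * μ ^ 2 := nsmul_eq_mul _ _
          _ ≤ (k:ℝ) * μ ^ 2 := by
              apply mul_le_mul_of_nonneg_right _ (sq_nonneg μ)
              have : (I.erase i).card ≤ k := hIcard ▸ Finset.card_erase_le.trans le_rfl
              exact_mod_cast this
      refine le_trans hsum ?_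
      rw [le_div_iff₀ hkR]
      nlinarith [sq_nonneg μ, sq_nonneg (k:ℝ), mul_nonneg (mul_nonneg (by norm_num : (0:ℝ) ≤ 2) (sq_nonneg (k:ℝ))) (sq_nonneg μ)]
    rw [Finset.filter_true_of_mem hall]
    have : (0:ℝ) ≤ (P.card : ℝ) := Nat.cast_nonneg _
    nlinarith [hε0]
  · -- probabilistic case
    push_neg at hdet
    have hδ2 : (0:ℝ) < δ ^ 2 := by positivity
    have h1a : (0:ℝ) < (1 - a) * δ ^ 2 := by nlinarith
    have hkne : k ≠ 0 := by
      intro h0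
      have hc0 : (k:ℝ) = 0 := by rw [h0]; norm_num
      have h00 : 2 * (k:ℝ) ^ 2 * μ ^ 2 = 0 := by rw [hc0]; ring
      linarith
    have hk1 : 1 ≤ k := Nat.one_le_iff_ne_zero.2 hkne
    have hkR : (1:ℝ) ≤ (k:ℝ) := by exact_mod_cast hk1
    have hkpos : (0:ℝ) < (k:ℝ) := by linarith
    have h2k2 : (0:ℝ) < 2 * (k:ℝ) ^ 2 := by positivity
    have hμ2 : 0 < μ ^ 2 := by
      by_contra hle
      push_neg at hle
      have hmm := mul_le_mul_of_nonneg_left hle h2k2.le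
      rw [mul_zero] at hmm
      linarith
    have hμ4 : 0 < μ ^ 4 := by
      have h44 : μ ^ 4 = (μ ^ 2) ^ 2 := by ring
      rw [h44]
      exact pow_pos hμ2 2
    set L := Real.log (2 * k / ε₁) with hL_def
    have hLpos : 0 < L := by
      apply Real.log_pos
      rw [lt_div_iff₀ hε0]
      linarith
    obtain ⟨l, hl_def⟩ : ∃ l : ℝ, l = (1 - a) * δ ^ 2 / (2 * (k:ℝ) ^ 2 * μ ^ 4) := ⟨_, rfl⟩
    have hlpos : 0 < l := by
      rw [hl_def]
      apply div_pos h1a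
      positivity
    have hl0 : 0 ≤ l := hlpos.le
    have hlM : l * μ ^ 2 ≤ 1 := by
      rw [hl_def, div_mul_eq_mul_div, div_le_one (by positivity)]
      have hmm := mul_le_mul_of_nonneg_right hdet (sq_nonneg μ)
      calc (1 - a) * δ ^ 2 * μ ^ 2 ≤ 2 * (k:ℝ) ^ 2 * μ ^ 2 * μ ^ 2 := hmm
        _ = 2 * (k:ℝ) ^ 2 * μ ^ 4 := by ring
    -- per-index tail bound
    obtain ⟨v, hv_def⟩ : ∃ v : ℝ, v = δ ^ 2 / (k:ℝ) := ⟨_, rfl⟩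
    set Q : Fin N → Finset (Finset (Fin N)) := fun i =>
      (Finset.powersetCard (k-1) ((univ : Finset (Fin N)).erase i)).filter
        (fun S => v < ∑ j ∈ S, (ip Φ i j) ^ 2) with hQ_def
    set B : Fin N → Finset (Finset (Fin N)) := fun i =>
      P.filter (fun I => i ∈ I ∧ v < ∑ j ∈ I.erase i, (ip Φ i j) ^ 2) with hB_def
    have hcastN : (((N - 1 : ℕ)) : ℝ) = (N:ℝ) - 1 := by
      rw [Nat.cast_sub (by omega)]
      norm_num
    have hcastK : (((k - 1 : ℕ)) : ℝ) = (k:ℝ) - 1 := by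
      rw [Nat.cast_sub hk1]
      norm_num
    have hQbound : ∀ i : Fin N, ((Q i).card : ℝ) ≤ ((N-1).choose (k-1) : ℝ) * (ε₁ / (2 * k)) := by
      intro i
      have hc_i : ∀ j ∈ (univ : Finset (Fin N)).erase i,
          0 ≤ (ip Φ i j) ^ 2 ∧ (ip Φ i j) ^ 2 ≤ μ ^ 2 := by
        intro j hj
        have hne : i ≠ j := fun h => (Finset.mem_erase.1 hj).1 h.symm
        refine ⟨sq_nonneg _, ?_⟩
        calc (ip Φ i j) ^ 2 = |ip Φ i j| ^ 2 := (sq_abs _).symm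
          _ ≤ μ ^ 2 := pow_le_pow_left₀ (abs_nonneg _) (hμ i j hne) 2
      have hcc := chernoff_count (fun j => (ip Φ i j) ^ 2) (μ ^ 2) l v hl0 hlM
        (k - 1) ((univ : Finset (Fin N)).erase i) hc_i
      have hAcard : ((univ : Finset (Fin N)).erase i).card = N - 1 := by
        rw [Finset.card_erase_of_mem (Finset.mem_univ i), Finset.card_univ, Fintype.card_fin]
      rw [hAcard] at hcc
      obtain ⟨E, hE_def⟩ : ∃ E : ℝ, E = l * ((k-1:ℕ):ℝ) *
          ((∑ j ∈ (univ : Finset (Fin N)).erase i, (ip Φ i j) ^ 2)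
          / ((N-1:ℕ):ℝ)) + ((k-1:ℕ):ℝ) * l ^ 2 * (μ ^ 2) ^ 2 := ⟨_, rfl⟩
      rw [← hE_def] at hcc
      have hq1 : ((Q i).card : ℝ) ≤ ((N-1).choose (k-1) : ℝ) * Real.exp (E - l * v) := by
        have hepos : (0:ℝ) < Real.exp (l * v) := Real.exp_pos _
        have := (le_div_iff₀ hepos).2 hcc
        rw [Real.exp_sub]
        calc ((Q i).card : ℝ)
            ≤ ((N-1).choose (k-1) : ℝ) * Real.exp E / Real.exp (l * v) := this
          _ = ((N-1).choose (k-1) : ℝ) * (Real.exp E / Real.exp (l * v)) := by ring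
      -- bound the exponent
      have hTi : (∑ j ∈ (univ : Finset (Fin N)).erase i, (ip Φ i j) ^ 2) / ((N-1:ℕ):ℝ) ≤ θ := by
        rw [hcastN, div_le_iff₀ hN1pos]
        calc (∑ j ∈ (univ : Finset (Fin N)).erase i, (ip Φ i j) ^ 2) = R i := rfl
          _ ≤ ((N:ℝ) - 1) * θ := hrow i
          _ = θ * ((N:ℝ) - 1) := mul_comm _ _
      have hTinn : 0 ≤ (∑ j ∈ (univ : Finset (Fin N)).erase i, (ip Φ i j) ^ 2) / ((N-1:ℕ):ℝ) := by
        rw [hcastN]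
        exact div_nonneg (hRnn i) hN1pos.le
      have hθ2 : ((k:ℝ) - 1) * θ ≤ a * δ ^ 2 / k := by
        have e1 : ((k:ℝ) - 1) * θ ≤ ((k:ℝ) - 1) * (a * δ ^ 2 / k ^ 2) :=
          mul_le_mul_of_nonneg_left h1 (by linarith)
        have e2 : ((k:ℝ) - 1) * (a * δ ^ 2 / k ^ 2) ≤ a * δ ^ 2 / k := by
          rw [show ((k:ℝ) - 1) * (a * δ ^ 2 / k ^ 2) = ((k:ℝ) - 1) * (a * δ ^ 2) / k ^ 2 from by ring,
            div_le_div_iff₀ (by positivity) hkpos]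
          have hq : ((k:ℝ) - 1) * (k:ℝ) ≤ (k:ℝ) ^ 2 := by
            have hqq : ((k:ℝ) - 1) * (k:ℝ) = (k:ℝ) ^ 2 - k := by ring
            linarith
          calc ((k:ℝ) - 1) * (a * δ ^ 2) * (k:ℝ) = (a * δ ^ 2) * (((k:ℝ) - 1) * (k:ℝ)) := by ring
            _ ≤ (a * δ ^ 2) * ((k:ℝ) ^ 2) := mul_le_mul_of_nonneg_left hq (by positivity)
            _ = a * δ ^ 2 * (k:ℝ) ^ 2 := by ring
        linarith
      have hE1 : E ≤ l * (a * δ ^ 2 / k) + (k:ℝ) * l ^ 2 * μ ^ 4 := by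
        rw [hE_def, hcastK]
        have p1 : l * ((k:ℝ) - 1) * ((∑ j ∈ (univ : Finset (Fin N)).erase i, (ip Φ i j) ^ 2)
            / ((N-1:ℕ):ℝ)) ≤ l * ((k:ℝ) - 1) * θ :=
          mul_le_mul_of_nonneg_left hTi (mul_nonneg hl0 (by linarith))
        have p2 : l * ((k:ℝ) - 1) * θ ≤ l * (a * δ ^ 2 / k) := by
          rw [mul_assoc]
          exact mul_le_mul_of_nonneg_left hθ2 hl0
        have p3 : ((k:ℝ) - 1) * l ^ 2 * (μ ^ 2) ^ 2 ≤ (k:ℝ) * l ^ 2 * μ ^ 4 := by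
          have hp3' : ((k:ℝ) - 1) ≤ (k:ℝ) := by linarith
          calc ((k:ℝ) - 1) * l ^ 2 * (μ ^ 2) ^ 2 = ((k:ℝ) - 1) * (l ^ 2 * μ ^ 4) := by ring
            _ ≤ (k:ℝ) * (l ^ 2 * μ ^ 4) := mul_le_mul_of_nonneg_right hp3' (by positivity)
            _ = (k:ℝ) * l ^ 2 * μ ^ 4 := by ring
        linarith
      have hE2 : l * (a * δ ^ 2 / k) + (k:ℝ) * l ^ 2 * μ ^ 4 - l * v
          = -((1 - a) ^ 2 * δ ^ 4 / (4 * (k:ℝ) ^ 3 * μ ^ 4)) := by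
        rw [hv_def, hl_def]
        field_simp
        ring
      have h8L : 8 * L ≤ (1 - a) ^ 2 * δ ^ 4 / (4 * (k:ℝ) ^ 3 * μ ^ 4) := by
        have h32 : (0:ℝ) < 32 * (k:ℝ) ^ 3 * L := by
          apply mul_pos (by positivity) hLpos
        have h2' := (le_div_iff₀ h32).1 h2
        rw [le_div_iff₀ (by apply mul_pos (by positivity : (0:ℝ) < 4 * (k:ℝ)^3) hμ4)]
        have hid : 8 * L * (4 * (k:ℝ) ^ 3 * μ ^ 4) = μ ^ 4 * (32 * (k:ℝ) ^ 3 * L) := by ring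
        linarith
      have hEv : E - l * v ≤ -(8 * L) := by
        have := hE1
        have h3 : E - l * v ≤ l * (a * δ ^ 2 / k) + (k:ℝ) * l ^ 2 * μ ^ 4 - l * v := by linarith
        rw [hE2] at h3
        linarith
      have hexp2 : Real.exp (E - l * v) ≤ ε₁ / (2 * k) := by
        have e1 : Real.exp (E - l * v) ≤ Real.exp (-L) := by
          apply Real.exp_le_exp.2
          linarith
        have e2 : Real.exp (-L) = ε₁ / (2 * k) := by
          rw [hL_def, Real.exp_neg, Real.exp_log (by positivity), inv_div]
        linarith [e1, e2.le]
      calc ((Q i).card : ℝ) ≤ ((N-1).choose (k-1) : ℝ) * Real.exp (E - l * v) := hq1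
        _ ≤ ((N-1).choose (k-1) : ℝ) * (ε₁ / (2 * k)) :=
            mul_le_mul_of_nonneg_left hexp2 (Nat.cast_nonneg _)
    -- union bound
    have hBQ : ∀ i : Fin N, (B i).card ≤ (Q i).card := by
      intro i
      apply Finset.card_le_card_of_injOn (fun I => I.erase i)
      · intro I hI
        simp only [hB_def, Finset.mem_coe, Finset.mem_filter] at hI
        obtain ⟨hIP, hiI, hgt⟩ := hI
        obtain ⟨hIsub, hIcard⟩ := Finset.mem_powersetCard.1 hIP
        simp only [hQ_def, Finset.mem_coe, Finset.mem_filter, Finset.mem_powersetCard]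
        refine ⟨⟨Finset.erase_subset_erase i hIsub, ?_⟩, hgt⟩
        rw [Finset.card_erase_of_mem hiI, hIcard]
      · intro I₁ h₁ I₂ h₂ heq
        have m₁ : i ∈ I₁ := by
          have hmem := Finset.mem_coe.1 h₁
          simp only [hB_def, Finset.mem_filter] at hmem
          exact hmem.2.1
        have m₂ : i ∈ I₂ := by
          have hmem := Finset.mem_coe.1 h₂
          simp only [hB_def, Finset.mem_filter] at hmem
          exact hmem.2.1
        have heq' : I₁.erase i = I₂.erase i := heq
        rw [← Finset.insert_erase m₁, ← Finset.insert_erase m₂, heq']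
    have hBadsub : P.filter (fun I => ¬ ev I) ⊆ univ.biUnion B := by
      intro I hI
      rw [Finset.mem_filter] at hI
      obtain ⟨hIP, hnev⟩ := hI
      have hnev2 : ¬ (∀ i ∈ I, ∑ j ∈ I.erase i, (ip Φ i j) ^ 2 ≤ δ ^ 2 / (k:ℝ)) := hnev
      have hnev3 : ∃ i ∈ I, ¬ (∑ j ∈ I.erase i, (ip Φ i j) ^ 2 ≤ δ ^ 2 / (k:ℝ)) := by
        by_contra hcon
        push_neg at hcon
        exact hnev2 fun i hi => hcon i hi
      obtain ⟨i, hiI, hgt⟩ := hnev3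
      rw [Finset.mem_biUnion]
      refine ⟨i, Finset.mem_univ i, ?_⟩
      simp only [hB_def, Finset.mem_filter]
      refine ⟨hIP, hiI, ?_⟩
      rw [hv_def]
      exact not_le.1 hgt
    have hBadcard : ((P.filter (fun I => ¬ ev I)).card : ℝ) ≤ ε₁ * P.card := by
      have s1 : (P.filter (fun I => ¬ ev I)).card ≤ ∑ i : Fin N, (B i).card :=
        le_trans (Finset.card_le_card hBadsub) Finset.card_biUnion_le
      have s2 : ((P.filter (fun I => ¬ ev I)).card : ℝ) ≤ ∑ i : Fin N, ((Q i).card : ℝ) := by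
        calc ((P.filter (fun I => ¬ ev I)).card : ℝ) ≤ (∑ i : Fin N, ((B i).card) : ℕ) := by
              exact_mod_cast s1
          _ = ∑ i : Fin N, ((B i).card : ℝ) := by push_cast; rfl
          _ ≤ ∑ i : Fin N, ((Q i).card : ℝ) := by
              exact Finset.sum_le_sum fun i _ => by exact_mod_cast hBQ i
      have s3 : (∑ i : Fin N, ((Q i).card : ℝ))
          ≤ (N : ℝ) * (((N-1).choose (k-1) : ℝ) * (ε₁ / (2 * k))) := by
        calc (∑ i : Fin N, ((Q i).card : ℝ))
            ≤ ∑ _i : Fin N, (((N-1).choose (k-1) : ℝ) * (ε₁ / (2 * k))) :=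
              Finset.sum_le_sum fun i _ => hQbound i
          _ = (N : ℝ) * (((N-1).choose (k-1) : ℝ) * (ε₁ / (2 * k))) := by
              rw [Finset.sum_const, Finset.card_univ, Fintype.card_fin, nsmul_eq_mul]
      have hNK : N * ((N-1).choose (k-1)) = N.choose k * k := by
        have h := Nat.add_one_mul_choose_eq (N-1) (k-1)
        have hN' : N - 1 + 1 = N := by omega
        have hk' : k - 1 + 1 = k := by omega
        rw [hN', hk'] at h
        exact h
      have hPcard : P.card = N.choose k := by
        rw [hP_def, Finset.card_powersetCard, Finset.card_univ, Fintype.card_fin]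
      have hNKR : (N : ℝ) * ((N-1).choose (k-1) : ℝ) = (N.choose k : ℝ) * (k : ℝ) := by
        exact_mod_cast congrArg (Nat.cast (R := ℝ)) hNK
      have s4 : (N : ℝ) * (((N-1).choose (k-1) : ℝ) * (ε₁ / (2 * k)))
          ≤ ε₁ * P.card := by
        rw [show (N : ℝ) * (((N-1).choose (k-1) : ℝ) * (ε₁ / (2 * k)))
            = ((N : ℝ) * ((N-1).choose (k-1) : ℝ)) * (ε₁ / (2 * k)) from by ring, hNKR, hPcard]
        rw [show ((N.choose k : ℝ) * (k:ℝ)) * (ε₁ / (2 * k)) = (N.choose k : ℝ) * ε₁ *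
            ((k:ℝ) / (2 * k)) from by ring]
        have hhalf : (k:ℝ) / (2 * k) = 1 / 2 := by
          rw [div_eq_div_iff (by positivity) (by norm_num : (2:ℝ) ≠ 0)]
          ring
        rw [hhalf]
        have : (0:ℝ) ≤ (N.choose k : ℝ) * ε₁ := mul_nonneg (Nat.cast_nonneg _) hε0.le
        linarith
      linarith
    have hsplit : (P.filter ev).card + (P.filter (fun I => ¬ ev I)).card = P.card :=
      Finset.card_filter_add_card_filter_not ev
    have hsplitR : ((P.filter ev).card : ℝ) = (P.card : ℝ)
        - ((P.filter (fun I => ¬ ev I)).card : ℝ) := by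
      have := congrArg (Nat.cast (R := ℝ)) hsplit
      push_cast at this
      linarith
    rw [hsplitR]
    linarith [hBadcard]
end
end

section
/- Let F be the N×N discrete Fourier transform matrix with entries F_{jk} = (1/√N)·e^{2πijk/N}, let M be a nonempty subset of {1,…,N}, and let Φ be the |M|×N matrix obtained by keeping the rows of F indexed by M and rescaling so that each column has unit ℓ₂ norm (i.e., Φ = √(N/|M|) · F_M). Then Φ is coherence-invariant, i.e., the multiset {μ_jk : k ≠ j} of coherences μ_jk = |⟨φ_j, φ_k⟩| (Hermitian inner product of the columns) does not depend on j, and the mean square coherence satisfies μ̄² = (1/(N(N−1))) Σ_{j≠k} μ_jk² = (N − |M|)/((N−1)·|M|). -/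
open Finset

open scoped Classical ComplexConjugate

noncomputable section

lemma sum_exp_fin (N : ℕ) (hN : 0 < N) (t : ℤ) :
    ∑ d : Fin N, Complex.exp (2 * Real.pi * Complex.I * t * ((d : ℕ) : ℤ) / N) =
    if (N : ℤ) ∣ t then (N : ℂ) else 0 := by
  have hNC : (N : ℂ) ≠ 0 := Nat.cast_ne_zero.mpr hN.ne'
  set x : ℂ := Complex.exp (2 * Real.pi * Complex.I * t / N) with hx
  have hterm : ∀ d : Fin N,
      Complex.exp (2 * Real.pi * Complex.I * t * ((d : ℕ) : ℤ) / N) = x ^ (d : ℕ) := by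
    intro d
    rw [hx, ← Complex.exp_nat_mul]
    congr 1
    push_cast
    ring
  rw [Finset.sum_congr rfl fun d _ => hterm d, Fin.sum_univ_eq_sum_range (x ^ ·)]
  by_cases hdvd : (N : ℤ) ∣ t
  · obtain ⟨q, rfl⟩ := hdvd
    have hx1 : x = 1 := by
      rw [hx]
      have : (2 : ℂ) * Real.pi * Complex.I * (((N : ℤ) * q : ℤ) : ℂ) / N =
          q * (2 * Real.pi * Complex.I) := by
        push_cast
        field_simp
      rw [this, Complex.exp_int_mul_two_pi_mul_I]
    simp [hx1]
  · have hx1 : x ≠ 1 := by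
      intro h
      rw [hx, Complex.exp_eq_one_iff] at h
      obtain ⟨n, hn⟩ := h
      apply hdvd
      refine ⟨n, ?_⟩
      have h2 : (2 : ℂ) * Real.pi * Complex.I ≠ 0 := by
        simp [Real.pi_ne_zero, Complex.I_ne_zero]
      field_simp at hn
      have : (t : ℂ) = (N : ℂ) * n := by
        apply mul_left_cancel₀ h2
        linear_combination (2 * (Real.pi : ℂ) * Complex.I) * hn
      exact_mod_cast this
    rw [geom_sum_eq hx1]
    have hxN : x ^ N = 1 := by
      rw [hx, ← Complex.exp_nat_mul]
      have : (N : ℂ) * (2 * Real.pi * Complex.I * t / N) = t * (2 * Real.pi * Complex.I) := by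
        field_simp
      rw [this, Complex.exp_int_mul_two_pi_mul_I]
    simp [hxN, hdvd]

lemma stmt16_arith (N m : ℕ) (hN : 0 < N) (hm : 0 < m) :
    ((N:ℝ) * ((N:ℝ)/(m:ℝ) - 1)) / ((N : ℝ) * ((N : ℝ) - 1)) =
      ((N : ℝ) - m) / (((N : ℝ) - 1) * m) := by
  rcases eq_or_ne ((N:ℝ) - 1) 0 with h1 | h1
  · rw [h1, mul_zero, div_zero, zero_mul, div_zero]
  · have hNR : (N:ℝ) ≠ 0 := by positivity
    have hmR : (m:ℝ) ≠ 0 := by positivity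
    field_simp

/-- Random harmonic frames: coherence invariance and mean square
coherence. -/
theorem stmt16 (N : ℕ) (M : Finset (Fin N)) (hM : M.Nonempty)
    (F : Matrix (Fin N) (Fin N) ℂ)
    (hF : ∀ j k : Fin N, F j k = (1 / (Real.sqrt N : ℂ)) *
        Complex.exp (2 * Real.pi * Complex.I * (j : ℕ) * (k : ℕ) / N)) :
    -- the normalized partial Fourier matrix `Φ = √(N/|M|) · F_M`
    let Φ : Matrix {r // r ∈ M} (Fin N) ℂ :=
      Matrix.of fun r j => (Real.sqrt ((N : ℝ) / M.card) : ℂ) * F (r : Fin N) j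
    -- the coherences `μ_jk = |⟨φ_j, φ_k⟩|`
    let μc : Fin N → Fin N → ℝ := fun j k =>
      ‖∑ r : {r // r ∈ M}, conj (Φ r j) * Φ r k‖
    -- `Φ` is coherence-invariant
    (∀ j j' : Fin N,
        Multiset.map (fun k => μc j k) ((univ : Finset (Fin N)).erase j).val =
        Multiset.map (fun k => μc j' k) ((univ : Finset (Fin N)).erase j').val) ∧
    -- and its mean square coherence equals `(N − |M|)/((N−1)|M|)`
    (∑ j, ∑ k ∈ (univ : Finset (Fin N)).erase j, μc j k ^ 2) /
        ((N : ℝ) * ((N : ℝ) - 1)) =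
      ((N : ℝ) - M.card) / (((N : ℝ) - 1) * M.card) := by
  intro Φ μc
  obtain ⟨r0, hr0⟩ := hM
  have hN : 0 < N := r0.pos
  haveI : NeZero N := ⟨hN.ne'⟩
  have hNC : (N : ℂ) ≠ 0 := Nat.cast_ne_zero.mpr hN.ne'
  set m : ℕ := M.card with hm
  have hm0 : 0 < m := Finset.card_pos.mpr ⟨r0, hr0⟩
  have hmR : (0:ℝ) < m := by exact_mod_cast hm0
  have hmC : (m : ℂ) ≠ 0 := Nat.cast_ne_zero.mpr hm0.ne'
  have hΦ : Φ = Matrix.of fun (r : {r // r ∈ M}) (j : Fin N) =>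
      (Real.sqrt ((N : ℝ) / m) : ℂ) * F (r : Fin N) j := rfl
  -- the column-correlation function
  set c : ℤ → ℂ :=
    fun t => ∑ r ∈ M, Complex.exp (2 * Real.pi * Complex.I * (t : ℂ) * (((r : ℕ) : ℤ) : ℂ) / N)
    with hc
  -- periodicity of `c`
  have hcongr : ∀ t t' : ℤ, (N : ℤ) ∣ (t - t') → c t = c t' := by
    intro t t' ⟨q, hq⟩
    have ht : t = t' + N * q := by linarith
    subst ht
    refine Finset.sum_congr rfl fun r _ => ?_
    have : (2 : ℂ) * Real.pi * Complex.I * ((t' + N * q : ℤ) : ℂ) * (((r : ℕ) : ℤ) : ℂ) / N =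
        2 * Real.pi * Complex.I * (t' : ℂ) * (((r : ℕ) : ℤ) : ℂ) / N +
          ((q * (r : ℕ) : ℤ) : ℂ) * (2 * Real.pi * Complex.I) := by
      push_cast
      field_simp
    rw [this, Complex.exp_add, Complex.exp_int_mul_two_pi_mul_I, mul_one]
  -- the inner-product formula
  have hμ : ∀ j k : Fin N,
      μc j k = (1 / (m:ℝ)) * ‖c (((k:ℕ) : ℤ) - ((j:ℕ) : ℤ))‖ := by
    intro j k
    have hterm : ∀ r : Fin N,
        conj ((Real.sqrt ((N:ℝ)/m) : ℂ) * F r j) * ((Real.sqrt ((N:ℝ)/m) : ℂ) * F r k)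
          = (1/(m:ℂ)) * Complex.exp (2 * Real.pi * Complex.I *
              ((((k:ℕ):ℤ) - ((j:ℕ):ℤ) : ℤ) : ℂ) * (((r:ℕ) : ℤ) : ℂ) / N) := by
      intro r
      rw [hF r j, hF r k]
      have hconjexp : conj (Complex.exp (2 * Real.pi * Complex.I * ((r:ℕ):ℂ) * ((j:ℕ):ℂ) / N))
          = Complex.exp (-(2 * Real.pi * Complex.I * ((r:ℕ):ℂ) * ((j:ℕ):ℂ) / N)) := by
        rw [← Complex.exp_conj]
        congr 1
        simp only [map_div₀, map_mul, Complex.conj_I, Complex.conj_ofReal, map_natCast,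
          map_ofNat]
        ring
      have hexp : Complex.exp (-(2 * Real.pi * Complex.I * ((r:ℕ):ℂ) * ((j:ℕ):ℂ) / N)) *
          Complex.exp (2 * Real.pi * Complex.I * ((r:ℕ):ℂ) * ((k:ℕ):ℂ) / N)
          = Complex.exp (2 * Real.pi * Complex.I *
              ((((k:ℕ):ℤ) - ((j:ℕ):ℤ) : ℤ) : ℂ) * (((r:ℕ) : ℤ) : ℂ) / N) := by
        rw [← Complex.exp_add]
        congr 1
        push_cast
        ring
      have hs : ((Real.sqrt ((N:ℝ)/m)) : ℂ) * ((Real.sqrt ((N:ℝ)/m)) : ℂ)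
          = (N:ℂ)/(m:ℂ) := by
        rw [← Complex.ofReal_mul, Real.mul_self_sqrt (by positivity)]
        push_cast
        ring
      have hs2 : ((Real.sqrt N) : ℂ) * ((Real.sqrt N) : ℂ) = (N:ℂ) := by
        rw [← Complex.ofReal_mul, Real.mul_self_sqrt (Nat.cast_nonneg N)]
        push_cast
        ring
      have hc12 : conj ((1:ℂ) / (Real.sqrt N : ℂ)) = (1:ℂ) / (Real.sqrt N : ℂ) := by
        rw [map_div₀, map_one, Complex.conj_ofReal]
      have h12 : ((1:ℂ)/(Real.sqrt N : ℂ)) * ((1:ℂ)/(Real.sqrt N : ℂ)) = 1/(N:ℂ) := by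
        rw [div_mul_div_comm, one_mul, hs2]
      rw [map_mul, map_mul, Complex.conj_ofReal, hc12, hconjexp]
      calc (Real.sqrt ((N:ℝ)/m) : ℂ) *
            ((1/(Real.sqrt N :ℂ)) *
              Complex.exp (-(2 * Real.pi * Complex.I * ((r:ℕ):ℂ) * ((j:ℕ):ℂ) / N))) *
            ((Real.sqrt ((N:ℝ)/m) : ℂ) *
              ((1/(Real.sqrt N:ℂ)) *
                Complex.exp (2 * Real.pi * Complex.I * ((r:ℕ):ℂ) * ((k:ℕ):ℂ) / N)))
          = ((Real.sqrt ((N:ℝ)/m) : ℂ) * (Real.sqrt ((N:ℝ)/m) : ℂ)) *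
              (((1:ℂ)/(Real.sqrt N:ℂ)) * ((1:ℂ)/(Real.sqrt N:ℂ))) *
              (Complex.exp (-(2 * Real.pi * Complex.I * ((r:ℕ):ℂ) * ((j:ℕ):ℂ) / N)) *
                Complex.exp (2 * Real.pi * Complex.I * ((r:ℕ):ℂ) * ((k:ℕ):ℂ) / N)) := by ring
        _ = (1/(m:ℂ)) * Complex.exp (2 * Real.pi * Complex.I *
              ((((k:ℕ):ℤ) - ((j:ℕ):ℤ) : ℤ) : ℂ) * (((r:ℕ) : ℤ) : ℂ) / N) := by
            rw [hs, h12, hexp]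
            congr 1
            field_simp
    have hsum : (∑ r : {r // r ∈ M}, conj (Φ r j) * Φ r k) =
        (1 / (m:ℂ)) * c (((k:ℕ) : ℤ) - ((j:ℕ) : ℤ)) := by
      calc (∑ r : {r // r ∈ M}, conj (Φ r j) * Φ r k)
          = ∑ r ∈ M, (1/(m:ℂ)) * Complex.exp (2 * Real.pi * Complex.I *
              ((((k:ℕ):ℤ) - ((j:ℕ):ℤ) : ℤ) : ℂ) * (((r:ℕ) : ℤ) : ℂ) / N) := by
            rw [hΦ]
            rw [← Finset.sum_coe_sort M (fun r => (1/(m:ℂ)) *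
              Complex.exp (2 * Real.pi * Complex.I *
                ((((k:ℕ):ℤ) - ((j:ℕ):ℤ) : ℤ) : ℂ) * (((r:ℕ) : ℤ) : ℂ) / N))]
            exact Finset.sum_congr rfl fun r _ => hterm r
        _ = _ := by rw [← Finset.mul_sum, hc]
    rw [show μc j k = ‖∑ r : {r // r ∈ M}, conj (Φ r j) * Φ r k‖ from rfl, hsum,
      norm_mul]
    congr 1
    rw [show (1 / (m:ℂ)) = ((1 / (m:ℝ) : ℝ) : ℂ) by push_cast; ring, Complex.norm_real, Real.norm_eq_abs,
      abs_of_pos (by positivity)]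
  -- `μc` only depends on the difference of indices
  set g : Fin N → ℝ := fun d => (1 / (m:ℝ)) * ‖c (((d : ℕ) : ℤ))‖ with hgdef
  have hg : ∀ j k : Fin N, μc j k = g (k - j) := by
    intro j k
    rw [hμ j k, hgdef]
    have hdvd : (N : ℤ) ∣ ((((k:ℕ) : ℤ) - ((j:ℕ) : ℤ)) - (((k - j : Fin N) : ℕ) : ℤ)) := by
      have hv : ((k - j : Fin N) : ℕ) = ((k : ℕ) + (N - (j : ℕ))) % N := by
        rw [Fin.sub_def]
        simp [Nat.add_comm]
      rw [hv]
      have hcast : ((((k : ℕ) + (N - (j : ℕ))) % N : ℕ) : ℤ)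
          = (((k:ℕ) : ℤ) + ((N : ℤ) - ((j:ℕ) : ℤ))) % N := by
        push_cast [Nat.cast_sub j.isLt.le]
        ring_nf
      rw [hcast]
      have h1 : (((k:ℕ) : ℤ) + ((N : ℤ) - ((j:ℕ) : ℤ))) % N
          = (((k:ℕ) : ℤ) - ((j:ℕ):ℤ)) % N := by
        conv_lhs => rw [show ((k:ℕ) : ℤ) + ((N : ℤ) - ((j:ℕ) : ℤ))
          = (((k:ℕ):ℤ) - ((j:ℕ):ℤ)) + (N : ℤ) * 1 by ring]
        rw [Int.add_mul_emod_self_left]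
      have hmod : ((((k:ℕ):ℤ) + ((N:ℤ) - ((j:ℕ):ℤ))) % N)
          ≡ (((k:ℕ):ℤ) - ((j:ℕ):ℤ)) [ZMOD (N:ℤ)] := by
        unfold Int.ModEq
        rw [Int.emod_emod_of_dvd _ dvd_rfl, h1]
      exact hmod.dvd
    rw [hcongr _ _ hdvd]
  -- coherence invariance
  have key : ∀ j : Fin N, Multiset.map (fun k => μc j k) ((univ : Finset (Fin N)).erase j).val =
      Multiset.map g ((univ : Finset (Fin N)).erase (0 : Fin N)).val := by
    intro j
    have h1 : Multiset.map (fun k => μc j k) ((univ : Finset (Fin N)).erase j).val =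
        Multiset.map g (((univ : Finset (Fin N)).erase j).val.map (fun k => k - j)) := by
      rw [Multiset.map_map]
      exact Multiset.map_congr rfl fun k _ => hg j k
    have h2 : ((univ : Finset (Fin N)).erase j).map (Equiv.subRight j).toEmbedding =
        (univ : Finset (Fin N)).erase (0 : Fin N) := by
      ext k
      simp only [Finset.mem_map, Finset.mem_erase, Finset.mem_univ, and_true,
        Equiv.coe_toEmbedding, Equiv.subRight_apply]
      constructor
      · rintro ⟨a, ha, rfl⟩
        simpa [sub_eq_zero] using ha
      · intro hk
        refine ⟨k + j, ?_, by simp⟩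
        intro h
        apply hk
        have := congrArg (fun x => x - j) h
        simpa using this
    have h3 : (((univ : Finset (Fin N)).erase j).val.map (fun k => k - j)) =
        ((univ : Finset (Fin N)).erase (0 : Fin N)).val := by
      rw [← h2, Finset.map_val]
      rfl
    rw [h1, h3]
  constructor
  · intro j j'
    rw [key j, key j']
  · -- the mean-square coherence computation
    have hinner : ∀ j : Fin N, ∑ k ∈ (univ : Finset (Fin N)).erase j, μc j k ^ 2
        = ∑ d ∈ (univ : Finset (Fin N)).erase (0 : Fin N), g d ^ 2 := by
      intro j
      have h := congrArg (fun s : Multiset ℝ => (s.map (fun x => x ^ 2)).sum) (key j)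
      simpa [Finset.sum, Multiset.map_map, Function.comp] using h
    -- the total correlation energy
    have hprod : ∀ t : ℤ, c t * conj (c t) =
        ∑ s ∈ M, ∑ r ∈ M, Complex.exp (2 * Real.pi * Complex.I *
          ((((s:ℕ):ℤ) - ((r:ℕ):ℤ) : ℤ) : ℂ) * ((t : ℤ) : ℂ) / N) := by
      intro t
      rw [hc]
      simp only
      rw [map_sum, Finset.sum_mul_sum]
      refine Finset.sum_congr rfl fun s _ => Finset.sum_congr rfl fun r _ => ?_
      rw [← Complex.exp_conj, ← Complex.exp_add]
      congr 1
      simp only [map_div₀, map_mul, Complex.conj_I, Complex.conj_ofReal, map_natCast,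
        map_intCast, map_ofNat]
      push_cast
      ring
    have hC : ∑ d : Fin N, c (((d:ℕ):ℤ)) * conj (c (((d:ℕ):ℤ))) = (m : ℂ) * N := by
      calc ∑ d : Fin N, c (((d:ℕ):ℤ)) * conj (c (((d:ℕ):ℤ)))
          = ∑ d : Fin N, ∑ s ∈ M, ∑ r ∈ M, Complex.exp (2 * Real.pi * Complex.I *
              ((((s:ℕ):ℤ) - ((r:ℕ):ℤ) : ℤ) : ℂ) * ((((d:ℕ):ℤ) : ℤ) : ℂ) / N) :=
            Finset.sum_congr rfl fun d _ => hprod _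
        _ = ∑ s ∈ M, ∑ r ∈ M, ∑ d : Fin N, Complex.exp (2 * Real.pi * Complex.I *
              ((((s:ℕ):ℤ) - ((r:ℕ):ℤ) : ℤ) : ℂ) * ((((d:ℕ):ℤ) : ℤ) : ℂ) / N) := by
            rw [Finset.sum_comm]
            exact Finset.sum_congr rfl fun s _ => Finset.sum_comm
        _ = ∑ s ∈ M, ∑ r ∈ M, if (N : ℤ) ∣ (((s:ℕ):ℤ) - ((r:ℕ):ℤ)) then (N : ℂ) else 0 :=
            Finset.sum_congr rfl fun s _ => Finset.sum_congr rfl fun r _ =>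
              sum_exp_fin N hN _
        _ = ∑ s ∈ M, ∑ r ∈ M, if r = s then (N : ℂ) else 0 := by
            refine Finset.sum_congr rfl fun s _ => Finset.sum_congr rfl fun r _ => ?_
            congr 1
            simp only [eq_iff_iff]
            constructor
            · intro hdvd
              have h0 : ((s:ℕ):ℤ) - ((r:ℕ):ℤ) = 0 := by
                refine Int.eq_zero_of_abs_lt_dvd hdvd ?_
                have hs := s.isLt
                have hr := r.isLt
                rw [abs_lt]
                omega
              have : (s : ℕ) = (r : ℕ) := by omega
              exact (Fin.ext this).symm
            · rintro rfl
              simp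
        _ = ∑ s ∈ M, (N : ℂ) := by
            refine Finset.sum_congr rfl fun s hs => ?_
            rw [Finset.sum_ite_eq' M s (fun _ => (N : ℂ))]
            exact if_pos hs
        _ = (m : ℂ) * N := by rw [Finset.sum_const, nsmul_eq_mul]
    have hT : ∑ d : Fin N, Complex.normSq (c (((d:ℕ):ℤ))) = (m : ℝ) * N := by
      have h := hC
      rw [Finset.sum_congr rfl (fun d _ => Complex.mul_conj _)] at h
      exact_mod_cast h
    have hg2 : ∀ d : Fin N, g d ^ 2 = (1/(m:ℝ))^2 * Complex.normSq (c (((d:ℕ):ℤ))) := by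
      intro d
      simp only [hgdef]
      rw [mul_pow, Complex.sq_norm]
    have hg0 : g 0 = 1 := by
      have hc0 : c ((((0 : Fin N):ℕ):ℤ)) = (m:ℂ) := by simp [hc, hm]
      simp only [hgdef]
      rw [hc0, Complex.norm_natCast, one_div, inv_mul_cancel₀ hmR.ne']
    have hS : ∑ d ∈ (univ : Finset (Fin N)).erase (0 : Fin N), g d ^ 2 = (N:ℝ)/m - 1 := by
      rw [Finset.sum_erase_eq_sub (Finset.mem_univ (0 : Fin N))]
      rw [Finset.sum_congr rfl fun d _ => hg2 d, ← Finset.mul_sum, hT, hg0]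
      rw [one_pow, div_pow, one_pow, div_mul_eq_mul_div, one_mul, sq,
        mul_div_mul_left _ _ hmR.ne']
    have htot : ∑ j : Fin N, ∑ k ∈ (univ : Finset (Fin N)).erase j, μc j k ^ 2
        = (N : ℝ) * ((N:ℝ)/m - 1) := by
      rw [Finset.sum_congr rfl fun j _ => hinner j, Finset.sum_const, Finset.card_univ,
        Fintype.card_fin, nsmul_eq_mul, hS]
    rw [htot]
    exact stmt16_arith N m hN hm0
end
end

section
/- Let C = (φ₁,…,φ_N) be a sequence of vectors in {−1/√m, +1/√m}^m that forms an orthogonal array of strength t: for every r ≤ t and every choice of r coordinate positions, the projection of a uniformly random element of C onto those positions is uniformly distributed over {−1/√m, +1/√m}^r. Let l be an even integer with 2 ≤ l ≤ t, let δ > 0 and ε ∈ (0,1), and suppose m ≥ (3/4)·l·(k/δ)²·(k/ε)^{2/l}. Then the m×N matrix Φ with columns φ₁,…,φ_N is (k,δ,ε)-StRIP. -/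
open Finset Matrix

open scoped Classical

noncomputable section

variable {m N : ℕ}

section AuxLemmas

lemma aux_specNorm_le {α β : Type*} [Fintype α] [Fintype β] (A : Matrix α β ℝ) {δ : ℝ} (hδ : 0 ≤ δ)
    (hrow : ∀ i, ∑ j, |A i j| ≤ δ) (hcol : ∀ j, ∑ i, |A i j| ≤ δ) : specNorm A ≤ δ := by
  apply Real.sSup_le _ hδ
  rintro tv ⟨x, hx, rfl⟩
  have key : ∑ i, (∑ j, A i j * x j) ^ 2 ≤ δ ^ 2 := by
    have h1 : ∀ i, (∑ j, A i j * x j) ^ 2 ≤ δ * ∑ j, |A i j| * x j ^ 2 := by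
      intro i
      have habs : (∑ j, A i j * x j) ^ 2 ≤ (∑ j, |A i j| * |x j|) ^ 2 := by
        rw [← sq_abs]
        apply pow_le_pow_left₀ (abs_nonneg _)
        refine (Finset.abs_sum_le_sum_abs _ _).trans ?_
        simp [abs_mul, le_refl]
      have hcs : (∑ j, |A i j| * |x j|) ^ 2 ≤ (∑ j, |A i j|) * (∑ j, |A i j| * x j ^ 2) := by
        have := Finset.sum_mul_sq_le_sq_mul_sq Finset.univ
          (fun j => Real.sqrt |A i j|) (fun j => Real.sqrt |A i j| * |x j|)
        simp only [mul_pow, Real.sq_sqrt (abs_nonneg _), sq_abs] at this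
        calc (∑ j, |A i j| * |x j|) ^ 2
            = (∑ j, Real.sqrt |A i j| * (Real.sqrt |A i j| * |x j|)) ^ 2 := by
              congr 1; apply Finset.sum_congr rfl; intro j _
              rw [← mul_assoc, Real.mul_self_sqrt (abs_nonneg _)]
          _ ≤ (∑ j, |A i j|) * (∑ j, |A i j| * x j ^ 2) := this
      refine habs.trans (hcs.trans ?_)
      apply mul_le_mul_of_nonneg_right (hrow i)
      exact Finset.sum_nonneg fun j _ => mul_nonneg (abs_nonneg _) (sq_nonneg _)
    calc ∑ i, (∑ j, A i j * x j) ^ 2 ≤ ∑ i, δ * ∑ j, |A i j| * x j ^ 2 :=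
          Finset.sum_le_sum fun i _ => h1 i
      _ = δ * ∑ j, (∑ i, |A i j|) * x j ^ 2 := by
          rw [← Finset.mul_sum, Finset.sum_comm]
          congr 1; apply Finset.sum_congr rfl; intro j _; rw [Finset.sum_mul]
      _ ≤ δ * ∑ j, δ * x j ^ 2 := by
          apply mul_le_mul_of_nonneg_left _ hδ
          exact Finset.sum_le_sum fun j _ =>
            mul_le_mul_of_nonneg_right (hcol j) (sq_nonneg _)
      _ = δ * (δ * ∑ j, x j ^ 2) := by rw [← Finset.mul_sum]
      _ ≤ δ * (δ * 1) := by
          apply mul_le_mul_of_nonneg_left _ hδ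
          exact mul_le_mul_of_nonneg_left hx hδ
      _ = δ ^ 2 := by ring
  calc Real.sqrt (∑ i, (∑ j, A i j * x j) ^ 2) ≤ Real.sqrt (δ ^ 2) := Real.sqrt_le_sqrt key
    _ = δ := Real.sqrt_sq hδ



lemma aux_amgm (a b n : ℕ) (h : a + b = 2 * n) : a * b ≤ n ^ 2 := by
  have h' : (a : ℤ) + b = 2 * n := by exact_mod_cast h
  have : (a : ℤ) * b ≤ (n : ℤ) ^ 2 := by nlinarith [sq_nonneg ((a : ℤ) - b)]
  exact_mod_cast this

lemma aux_oddprod_le (n : ℕ) : (∏ i ∈ Finset.range n, (2 * i + 1)) ≤ n ^ n := by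
  have hsq : (∏ i ∈ Finset.range n, (2 * i + 1)) ^ 2 ≤ (n ^ n) ^ 2 := by
    calc (∏ i ∈ Finset.range n, (2 * i + 1)) ^ 2
        = (∏ i ∈ Finset.range n, (2 * i + 1)) * ∏ i ∈ Finset.range n, (2 * (n - 1 - i) + 1) := by
          rw [Finset.prod_range_reflect (fun j => 2 * j + 1) n, sq]
      _ = ∏ i ∈ Finset.range n, (2 * i + 1) * (2 * (n - 1 - i) + 1) := by
          rw [Finset.prod_mul_distrib]
      _ ≤ ∏ _i ∈ Finset.range n, n ^ 2 := by
          apply Finset.prod_le_prod (fun _ _ => Nat.zero_le _)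
          intro i hi
          rw [Finset.mem_range] at hi
          exact aux_amgm _ _ _ (by omega)
      _ = (n ^ n) ^ 2 := by rw [Finset.prod_const, Finset.card_range, ← pow_mul, ← pow_mul,
            Nat.mul_comm]
  by_contra h
  push_neg at h
  have := Nat.pow_lt_pow_left h (n := 2) (by norm_num)
  omega


lemma aux_evenfun_card (l mm : ℕ) (z : Fin mm) (s : Finset (Fin l)) :
    ((univ : Finset (Fin l → Fin mm)).filter
        (fun f => (∀ v, Even ((s.filter (fun x => f x = v)).card)) ∧ ∀ x ∉ s, f x = z)).card
      ≤ (∏ i ∈ Finset.range (s.card / 2), (2 * i + 1)) * mm ^ (s.card / 2) := by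
  induction s using Finset.strongInduction with
  | _ s IH =>
  rcases Finset.eq_empty_or_nonempty s with rfl | hs
  · have h1 : ((univ : Finset (Fin l → Fin mm)).filter
        (fun f => (∀ v, Even (((∅ : Finset (Fin l)).filter (fun x => f x = v)).card))
          ∧ ∀ x ∉ (∅ : Finset (Fin l)), f x = z)).card ≤ 1 := by
      apply Finset.card_le_one.mpr
      intro f hf g hg
      simp only [Finset.mem_filter] at hf hg
      funext x
      rw [hf.2.2 x (by simp), hg.2.2 x (by simp)]
    simpa using h1
  by_cases heven : Even s.card
  swap
  · -- odd cardinality: the filter is empty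
    have hempty : ((univ : Finset (Fin l → Fin mm)).filter
        (fun f => (∀ v, Even ((s.filter (fun x => f x = v)).card)) ∧ ∀ x ∉ s, f x = z)) = ∅ := by
      rw [Finset.filter_eq_empty_iff]
      intro f _
      intro hcontra
      apply heven
      have hcard : s.card = ∑ v : Fin mm, (s.filter (fun x => f x = v)).card :=
        Finset.card_eq_sum_card_fiberwise (fun x _ => Finset.mem_univ (f x))
      rw [hcard]
      exact Finset.even_sum _ (fun v _ => hcontra.1 v)
    rw [hempty]
    simp
  -- main case: s nonempty of even cardinality
  obtain ⟨nn, hnn⟩ := heven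
  have hnn' : s.card = 2 * nn := by omega
  have hnnpos : 1 ≤ nn := by
    have := Finset.card_pos.mpr hs
    omega
  obtain ⟨n', rfl⟩ : ∃ n', nn = n' + 1 := ⟨nn - 1, by omega⟩
  set x₀ := s.min' hs with hx₀def
  have hx₀ : x₀ ∈ s := s.min'_mem hs
  set Fset : Finset (Fin l) → Finset (Fin l → Fin mm) := fun u =>
    ((univ : Finset (Fin l → Fin mm)).filter
        (fun f => (∀ v, Even ((u.filter (fun x => f x = v)).card)) ∧ ∀ x ∉ u, f x = z))
    with hFset
  -- facts about elements of Fset s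
  have hfib : ∀ f ∈ Fset s, x₀ ∈ (s.filter (fun x => f x = f x₀)).erase x₀ → False := by
    intro f _ hmem; exact (Finset.notMem_erase _ _) hmem
  have hyspec : ∀ f ∈ Fset s, ∃ y, y ∈ (s.filter (fun x => f x = f x₀)).erase x₀ := by
    intro f hf
    simp only [hFset, Finset.mem_filter] at hf
    have hx₀fib : x₀ ∈ s.filter (fun x => f x = f x₀) := by
      simp [Finset.mem_filter, hx₀]
    have hcard : Even ((s.filter (fun x => f x = f x₀)).card) := hf.2.1 (f x₀)
    have h2 : 2 ≤ (s.filter (fun x => f x = f x₀)).card := by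
      have h1 : 1 ≤ (s.filter (fun x => f x = f x₀)).card :=
        Finset.card_pos.mpr ⟨x₀, hx₀fib⟩
      rcases hcard with ⟨r, hr⟩; omega
    have : 1 ≤ ((s.filter (fun x => f x = f x₀)).erase x₀).card := by
      rw [Finset.card_erase_of_mem hx₀fib]; omega
    obtain ⟨y, hy⟩ := Finset.card_pos.mp this
    exact ⟨y, hy⟩
  classical
  set yf : (Fin l → Fin mm) → Fin l := fun f =>
    if h : ((s.filter (fun x => f x = f x₀)).erase x₀).Nonempty
    then ((s.filter (fun x => f x = f x₀)).erase x₀).min' h else x₀ with hyfdef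
  have hyf : ∀ f ∈ Fset s, yf f ∈ (s.filter (fun x => f x = f x₀)).erase x₀ := by
    intro f hf
    obtain ⟨y, hy⟩ := hyspec f hf
    rw [hyfdef]
    have hne : ((s.filter (fun x => f x = f x₀)).erase x₀).Nonempty := ⟨y, hy⟩
    simp only [dif_pos hne]
    exact Finset.min'_mem _ hne
  have hyf_props : ∀ f ∈ Fset s, yf f ∈ s ∧ yf f ≠ x₀ ∧ f (yf f) = f x₀ := by
    intro f hf
    have h := hyf f hf
    simp only [Finset.mem_erase, Finset.mem_filter] at h
    exact ⟨h.2.1, h.1, h.2.2⟩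
  set gf : (Fin l → Fin mm) → (Fin l → Fin mm) := fun f x =>
    if x = x₀ ∨ x = yf f then z else f x with hgfdef
  set T : Finset ((_ : Fin l) × (Fin mm × (Fin l → Fin mm))) :=
    (s.erase x₀).sigma (fun y => (univ : Finset (Fin mm)) ×ˢ Fset ((s.erase x₀).erase y)) with hT
  have hmap : ∀ f ∈ Fset s, (⟨yf f, (f x₀, gf f)⟩ : (_ : Fin l) × (Fin mm × (Fin l → Fin mm))) ∈ T := by
    intro f hf
    obtain ⟨hys, hyne, hfy⟩ := hyf_props f hf
    rw [hT, Finset.mem_sigma]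
    refine ⟨Finset.mem_erase.mpr ⟨hyne, hys⟩, ?_⟩
    rw [Finset.mem_product]
    refine ⟨Finset.mem_univ _, ?_⟩
    have hf' := hf
    rw [hFset] at hf' ⊢
    simp only [Finset.mem_filter] at hf' ⊢
    refine ⟨Finset.mem_univ _, ?_, ?_⟩
    · intro v
      have hset : ((s.erase x₀).erase (yf f)).filter (fun x => gf f x = v)
          = ((s.filter (fun x => f x = v)).erase x₀).erase (yf f) := by
        ext x
        simp only [Finset.mem_filter, Finset.mem_erase, hgfdef]
        constructor
        · rintro ⟨⟨hxy, hxx0, hxs⟩, hgx⟩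
          rw [if_neg (show ¬(x = x₀ ∨ x = yf f) by tauto)] at hgx
          exact ⟨hxy, hxx0, hxs, hgx⟩
        · rintro ⟨hxy, hxx0, hxs, hfx⟩
          refine ⟨⟨hxy, hxx0, hxs⟩, ?_⟩
          rw [if_neg (show ¬(x = x₀ ∨ x = yf f) by tauto)]
          exact hfx
      rw [hset]
      by_cases hv : v = f x₀
      · subst hv
        have hx₀mem : x₀ ∈ s.filter (fun x => f x = f x₀) := by simp [Finset.mem_filter, hx₀]
        have hymem : yf f ∈ (s.filter (fun x => f x = f x₀)).erase x₀ := hyf f hf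
        rw [Finset.card_erase_of_mem hymem, Finset.card_erase_of_mem hx₀mem]
        have := hf'.2.1 (f x₀)
        rcases this with ⟨r, hr⟩
        have h2 : 2 ≤ (s.filter (fun x => f x = f x₀)).card := by
          have : 1 ≤ (s.filter (fun x => f x = f x₀)).card := Finset.card_pos.mpr ⟨x₀, hx₀mem⟩
          omega
        rw [Nat.even_iff] at *
        omega
      · have hx₀notmem : x₀ ∉ s.filter (fun x => f x = v) := by
          simp only [Finset.mem_filter]
          rintro ⟨-, h⟩; exact hv h.symm
        have hynotmem : yf f ∉ (s.filter (fun x => f x = v)).erase x₀ := by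
          simp only [Finset.mem_erase, Finset.mem_filter]
          rintro ⟨-, -, h⟩; rw [hfy] at h; exact hv h.symm
        rw [Finset.erase_eq_of_notMem hynotmem, Finset.erase_eq_of_notMem hx₀notmem]
        exact hf'.2.1 v
    · intro x hx
      simp only [Finset.mem_erase, not_and] at hx
      by_cases hc : x = x₀ ∨ x = yf f
      · simp only [hgfdef, if_pos hc]
      · push_neg at hc
        simp only [hgfdef]
        rw [if_neg (show ¬(x = x₀ ∨ x = yf f) by tauto)]
        exact hf'.2.2 x (hx hc.2 hc.1)
  have hinj : Set.InjOn (fun f => (⟨yf f, (f x₀, gf f)⟩ : (_ : Fin l) × (Fin mm × (Fin l → Fin mm))))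
      (Fset s : Set (Fin l → Fin mm)) := by
    intro f₁ hf₁ f₂ hf₂ heq
    simp only [Finset.mem_coe] at hf₁ hf₂
    obtain ⟨hy₁s, hy₁ne, hfy₁⟩ := hyf_props f₁ hf₁
    obtain ⟨hy₂s, hy₂ne, hfy₂⟩ := hyf_props f₂ hf₂
    have hy : yf f₁ = yf f₂ := congrArg Sigma.fst heq
    have hrest : (f₁ x₀, gf f₁) = (f₂ x₀, gf f₂) := by
      have := (Sigma.mk.inj_iff.mp heq).2
      exact eq_of_heq this
    have hc : f₁ x₀ = f₂ x₀ := (Prod.mk.injEq _ _ _ _ ▸ hrest).1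
    have hg : gf f₁ = gf f₂ := (Prod.mk.injEq _ _ _ _ ▸ hrest).2
    funext x
    by_cases h1 : x = x₀
    · rw [h1, hc]
    by_cases h2 : x = yf f₁
    · rw [h2, hfy₁, hc, hy, hfy₂]
    · have := congrFun hg x
      simp only [hgfdef, if_neg (by tauto), hy ▸ (show ¬(x = x₀ ∨ x = yf f₂) by
        rw [← hy]; tauto)] at this
      simpa [if_neg (show ¬(x = x₀ ∨ x = yf f₂) by rw [← hy]; tauto)] using this
  have hcardle : (Fset s).card ≤ T.card := Finset.card_le_card_of_injOn _ hmap hinj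
  have hTcard : T.card = ∑ y ∈ s.erase x₀, mm * (Fset ((s.erase x₀).erase y)).card := by
    rw [hT, Finset.card_sigma]
    apply Finset.sum_congr rfl
    intro y _
    rw [Finset.card_product, Finset.card_univ, Fintype.card_fin]
  have hbound : ∀ y ∈ s.erase x₀, (Fset ((s.erase x₀).erase y)).card
      ≤ (∏ i ∈ Finset.range n', (2 * i + 1)) * mm ^ n' := by
    intro y hy
    have hsub : (s.erase x₀).erase y ⊂ s := by
      apply Finset.ssubset_of_subset_of_ssubset (Finset.erase_subset _ _)
      exact Finset.erase_ssubset hx₀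
    have hcard : ((s.erase x₀).erase y).card = 2 * n' := by
      rw [Finset.card_erase_of_mem hy, Finset.card_erase_of_mem hx₀, hnn']
      omega
    have := IH _ hsub
    rwa [hcard, Nat.mul_div_cancel_left _ (by norm_num : 0 < 2)] at this
  calc (Fset s).card ≤ T.card := hcardle
    _ = ∑ y ∈ s.erase x₀, mm * (Fset ((s.erase x₀).erase y)).card := hTcard
    _ ≤ ∑ _y ∈ s.erase x₀, mm * ((∏ i ∈ Finset.range n', (2 * i + 1)) * mm ^ n') := by
        apply Finset.sum_le_sum
        intro y hy
        exact Nat.mul_le_mul_left _ (hbound y hy)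
    _ = (s.card - 1) * (mm * ((∏ i ∈ Finset.range n', (2 * i + 1)) * mm ^ n')) := by
        rw [Finset.sum_const, Finset.card_erase_of_mem hx₀, smul_eq_mul]
    _ ≤ (∏ i ∈ Finset.range (s.card / 2), (2 * i + 1)) * mm ^ (s.card / 2) := by
        rw [hnn', Nat.mul_div_cancel_left _ (by norm_num : 0 < 2)]
        rw [Finset.prod_range_succ]
        have h1 : 2 * (n' + 1) - 1 = 2 * n' + 1 := by omega
        rw [h1]
        apply Nat.le_of_eq
        ring


lemma aux_evenfun_card_univ (l n mm : ℕ) (hln : l = n + n) (hmm : 0 < mm) :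
    ((univ : Finset (Fin l → Fin mm)).filter
      (fun f => ∀ v, Even (((univ : Finset (Fin l)).filter (fun x => f x = v)).card))).card
      ≤ n ^ n * mm ^ n := by
  have hdiv : l / 2 = n := by omega
  have h := aux_evenfun_card l mm ⟨0, hmm⟩ univ
  simp only [Finset.card_univ, Fintype.card_fin] at h
  rw [hdiv] at h
  have heq : ((univ : Finset (Fin l → Fin mm)).filter
      (fun f => ∀ v, Even (((univ : Finset (Fin l)).filter (fun x => f x = v)).card)))
      = ((univ : Finset (Fin l → Fin mm)).filter
        (fun f => (∀ v, Even (((univ : Finset (Fin l)).filter (fun x => f x = v)).card))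
          ∧ ∀ x ∉ (univ : Finset (Fin l)), f x = ⟨0, hmm⟩)) := by
    apply Finset.filter_congr
    intro f _
    simp
  rw [heq]
  exact h.trans (Nat.mul_le_mul_right _ (aux_oddprod_le n))

lemma aux_moment (m N t l n : ℕ) (hm1 : 1 ≤ m) (hln : l = n + n)
    (Φ : Matrix (Fin m) (Fin N) ℝ)
    (hentries : ∀ r j, Φ r j = 1 / Real.sqrt m ∨ Φ r j = -(1 / Real.sqrt m))
    (hOA : ∀ r : ℕ, r ≤ t → ∀ p : Fin r → Fin m, Function.Injective p →
      ∀ v : Fin r → ℝ, (∀ s, v s = 1 / Real.sqrt m ∨ v s = -(1 / Real.sqrt m)) →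
      (((univ : Finset (Fin N)).filter fun j => ∀ s, Φ (p s) j = v s).card) * 2 ^ r = N)
    (hlt : l ≤ t) (j : Fin N) :
    ∑ i : Fin N, (∑ r, Φ r i * Φ r j) ^ l ≤ (N : ℝ) * n ^ n / m ^ n := by
  have hm0 : (0 : ℝ) < m := by exact_mod_cast hm1
  have hsqrt0 : (0 : ℝ) < Real.sqrt m := Real.sqrt_pos.mpr hm0
  have hne : (1 : ℝ) / Real.sqrt m ≠ -(1 / Real.sqrt m) := by
    have : (0:ℝ) < 1 / Real.sqrt m := by positivity
    intro h; rw [h] at this; linarith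
  have hsq : ∀ r i, Φ r i ^ 2 = 1 / (m : ℝ) := by
    intro r i
    rcases hentries r i with h | h <;> rw [h]
    · rw [div_pow, one_pow, Real.sq_sqrt hm0.le]
    · rw [neg_pow, div_pow, one_pow, Real.sq_sqrt hm0.le]; ring
  set c : (Fin l → Fin m) → Fin m → ℕ :=
    fun f v => (((univ : Finset (Fin l)).filter (fun x => f x = v)).card) with hc
  -- fiberwise product
  have hfibprod : ∀ (f : Fin l → Fin m) (g : Fin m → ℝ),
      ∏ s : Fin l, g (f s) = ∏ v : Fin m, g v ^ c f v := by
    intro f g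
    rw [← Finset.prod_fiberwise_of_maps_to (fun x _ => Finset.mem_univ (f x)) (fun x => g (f x))]
    apply Finset.prod_congr rfl
    intro v _
    rw [Finset.prod_congr rfl (fun x hx => by rw [(Finset.mem_filter.mp hx).2]),
      Finset.prod_const]
  have hcsum : ∀ f : Fin l → Fin m, ∑ v, c f v = l := by
    intro f
    have := Finset.card_eq_sum_card_fiberwise (fun (x : Fin l) (_ : x ∈ univ) => Finset.mem_univ (f x))
    rw [Finset.card_univ, Fintype.card_fin] at this
    exact this.symm
  -- even case
  have heven_prod : ∀ f : Fin l → Fin m, (∀ v, Even (c f v)) → ∀ i,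
      ∏ s : Fin l, Φ (f s) i = (1 / (m : ℝ)) ^ n := by
    intro f hf i
    choose d hd using hf
    rw [hfibprod f (fun v => Φ v i)]
    have h2 : ∀ v : Fin m, Φ v i ^ (c f v) = ((1 : ℝ) / m) ^ d v := by
      intro v
      rw [hd v, ← two_mul, pow_mul, hsq]
    rw [Finset.prod_congr rfl (fun v _ => h2 v), Finset.prod_pow_eq_pow_sum]
    congr 1
    have h3 : ∑ v, (d v + d v) = l := by
      rw [← hcsum f]; apply Finset.sum_congr rfl; intro v _; rw [hd v]
    rw [Finset.sum_add_distrib] at h3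
    omega
  -- odd case
  have hodd_sum : ∀ f : Fin l → Fin m, (¬ ∀ v, Even (c f v)) →
      ∑ i : Fin N, ∏ s : Fin l, Φ (f s) i = 0 := by
    intro f hf
    push_neg at hf
    obtain ⟨v₀, hv₀⟩ := hf
    set R : Finset (Fin m) := Finset.image f univ with hR
    set q : ℕ := R.card with hq
    have hql : q ≤ l := by
      rw [hq, hR]
      exact (Finset.card_image_le).trans (by simp)
    set p := R.orderEmbOfFin (rfl : R.card = q) with hp
    have hpinj : Function.Injective p := p.injective
    have hpmem : ∀ s, p s ∈ R := fun s => Finset.orderEmbOfFin_mem R rfl s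
    have hpsurj : ∀ v ∈ R, ∃ s, p s = v := by
      intro v hv
      have := Finset.range_orderEmbOfFin R (rfl : R.card = q)
      rw [Set.ext_iff] at this
      exact (this v).mpr hv
    -- rewrite the product over Fin q
    have hGi : ∀ i, ∏ s : Fin l, Φ (f s) i = ∏ s : Fin q, Φ (p s) i ^ c f (p s) := by
      intro i
      rw [hfibprod f (fun v => Φ v i)]
      have hzero : ∀ v ∈ (univ : Finset (Fin m)), v ∉ R → Φ v i ^ c f v = 1 := by
        intro v _ hv
        have : c f v = 0 := by
          rw [hc]
          simp only [Finset.card_eq_zero, Finset.filter_eq_empty_iff]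
          intro x _ hx
          exact hv (by rw [hR, ← hx]; exact Finset.mem_image_of_mem f (Finset.mem_univ x))
        rw [this, pow_zero]
      rw [← Finset.prod_subset (Finset.subset_univ R) (fun v hv hvR => hzero v hv hvR)]
      exact (Finset.prod_bij (fun (s : Fin q) (_ : s ∈ univ) => p s)
        (fun s _ => hpmem s) (fun a _ b _ h => hpinj h)
        (fun v hv => by obtain ⟨s, hs⟩ := hpsurj v hv; exact ⟨s, Finset.mem_univ s, hs⟩)
        (fun s _ => rfl)).symm
    -- pattern classification
    set β : Fin N → (Fin q → Bool) := fun i s => decide (Φ (p s) i = 1 / Real.sqrt m) with hβ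
    set valOf : Bool → ℝ := fun b => if b then 1 / Real.sqrt m else -(1 / Real.sqrt m) with hvalOf
    have hvTF : valOf true = 1 / Real.sqrt m := by rw [hvalOf]; rfl
    have hvFF : valOf false = -(1 / Real.sqrt m) := by rw [hvalOf]; rfl
    have hval : ∀ i s, Φ (p s) i = valOf (β i s) := by
      intro i s
      rcases hentries (p s) i with h | h
      · have htrue : β i s = true := by rw [hβ]; exact decide_eq_true h
        rw [htrue, hvTF]; exact h
      · have hfalse : β i s = false := by
          rw [hβ]
          apply decide_eq_false
          rw [h]
          exact fun hh => hne hh.symm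
        rw [hfalse, hvFF]; exact h
    have hvinj : ∀ a b : Bool, valOf a = valOf b → a = b := by
      intro a b hab
      cases a <;> cases b
      · rfl
      · exfalso; rw [hvFF, hvTF] at hab; exact hne hab.symm
      · exfalso; rw [hvTF, hvFF] at hab; exact hne hab
      · rfl
    have hclass : ∀ b : Fin q → Bool,
        ((univ : Finset (Fin N)).filter (fun i => β i = b)).card * 2 ^ q = N := by
      intro b
      have heqf : ((univ : Finset (Fin N)).filter (fun i => β i = b))
          = ((univ : Finset (Fin N)).filter (fun i => ∀ s, Φ (p s) i = valOf (b s))) := by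
        apply Finset.filter_congr
        intro i _
        constructor
        · intro h s; rw [hval i s, h]
        · intro h
          funext s
          apply hvinj
          rw [← hval i s]
          exact h s
      rw [heqf]
      exact hOA q (hql.trans hlt) p hpinj (fun s => valOf (b s))
        (fun s => by
          rcases Bool.eq_false_or_eq_true (b s) with hb | hb
          · left; show valOf (b s) = _; rw [hb, hvTF]
          · right; show valOf (b s) = _; rw [hb, hvFF])
    -- the main computation
    have hkey : (∑ i : Fin N, ∏ s : Fin q, Φ (p s) i ^ c f (p s)) * 2 ^ q
        = (N : ℝ) * ∑ b : Fin q → Bool, ∏ s : Fin q, valOf (b s) ^ c f (p s) := by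
      rw [← Finset.sum_fiberwise_of_maps_to (fun i (_ : i ∈ univ) => Finset.mem_univ (β i))
        (fun i => ∏ s : Fin q, Φ (p s) i ^ c f (p s))]
      rw [Finset.sum_mul, Finset.mul_sum]
      apply Finset.sum_congr rfl
      intro b _
      have hin : ∀ i ∈ (univ : Finset (Fin N)).filter (fun i => β i = b),
          ∏ s : Fin q, Φ (p s) i ^ c f (p s) = ∏ s : Fin q, valOf (b s) ^ c f (p s) := by
        intro i hi
        have hib : β i = b := (Finset.mem_filter.mp hi).2
        apply Finset.prod_congr rfl
        intro s _
        rw [hval i s, hib]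
      rw [Finset.sum_congr rfl hin, Finset.sum_const, nsmul_eq_mul, mul_comm, ← mul_assoc]
      congr 1
      rw [mul_comm]
      have := hclass b
      push_cast [← this]
      ring
    have hzero : ∑ b : Fin q → Bool, ∏ s : Fin q, valOf (b s) ^ c f (p s) = 0 := by
      have hv₀R : v₀ ∈ R := by
        rw [hR]
        by_contra hcon
        apply hv₀
        have : c f v₀ = 0 := by
          rw [hc]
          simp only [Finset.card_eq_zero, Finset.filter_eq_empty_iff]
          intro x _ hx
          exact hcon (by rw [← hx]; exact Finset.mem_image_of_mem f (Finset.mem_univ x))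
        rw [this]; exact Even.zero
      obtain ⟨s₀, hs₀⟩ := hpsurj v₀ hv₀R
      have hrw : ∑ b : Fin q → Bool, ∏ s : Fin q, valOf (b s) ^ c f (p s)
          = ∏ s : Fin q, ∑ x : Bool, valOf x ^ c f (p s) := by
        rw [Finset.prod_univ_sum (fun _ => (univ : Finset Bool))
          (fun s x => valOf x ^ c f (p s))]
        rw [Fintype.piFinset_univ]
      rw [hrw]
      apply Finset.prod_eq_zero (Finset.mem_univ s₀)
      have hoddc : Odd (c f (p s₀)) := by
        rw [hs₀]
        rcases Nat.even_or_odd (c f v₀) with h | h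
        · exact absurd h hv₀
        · exact h
      rw [Fintype.sum_bool, hvTF, hvFF, Odd.neg_pow hoddc]
      ring
    have h2q : (2 : ℝ) ^ q ≠ 0 := by positivity
    have := hkey
    rw [hzero, mul_zero] at this
    have hsum0 : ∑ i : Fin N, ∏ s : Fin q, Φ (p s) i ^ c f (p s) = 0 := by
      by_contra hcon
      exact hcon (by
        have := mul_eq_zero.mp this
        rcases this with h | h
        · exact h
        · exact absurd h h2q)
    rw [Finset.sum_congr rfl (fun i _ => hGi i)]
    exact hsum0
  -- expansion
  have hexpand : ∀ i : Fin N, (∑ r, Φ r i * Φ r j) ^ l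
      = ∑ f : Fin l → Fin m, ∏ s : Fin l, (Φ (f s) i * Φ (f s) j) := by
    intro i
    have h1 : (∑ r, Φ r i * Φ r j) ^ l = ∏ _s : Fin l, (∑ r, Φ r i * Φ r j) := by
      rw [Finset.prod_const, Finset.card_univ, Fintype.card_fin]
    rw [h1, Finset.prod_univ_sum (fun _ => (univ : Finset (Fin m)))
      (fun _ r => Φ r i * Φ r j), Fintype.piFinset_univ]
  set K : Finset (Fin l → Fin m) :=
    (univ : Finset (Fin l → Fin m)).filter (fun f => ∀ v, Even (c f v)) with hK
  have hKcard : (K.card : ℝ) ≤ (n : ℝ) ^ n * (m : ℝ) ^ n := by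
    have := aux_evenfun_card_univ l n m hln hm1
    rw [hK]
    exact_mod_cast this
  have hmain : ∑ i : Fin N, (∑ r, Φ r i * Φ r j) ^ l
      = (N : ℝ) * K.card * ((1 / (m : ℝ)) ^ n * (1 / (m : ℝ)) ^ n) := by
    rw [Finset.sum_congr rfl (fun i _ => hexpand i), Finset.sum_comm]
    have hterm : ∀ f : Fin l → Fin m,
        ∑ i : Fin N, ∏ s : Fin l, (Φ (f s) i * Φ (f s) j)
        = (∑ i : Fin N, ∏ s : Fin l, Φ (f s) i) * ∏ s : Fin l, Φ (f s) j := by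
      intro f
      rw [Finset.sum_mul]
      apply Finset.sum_congr rfl
      intro i _
      rw [Finset.prod_mul_distrib]
    rw [Finset.sum_congr rfl (fun f _ => hterm f)]
    rw [← Finset.sum_filter_add_sum_filter_not univ (fun f => ∀ v, Even (c f v))]
    have hpart2 : ∑ f ∈ univ.filter (fun f => ¬ ∀ v, Even (c f v)),
        (∑ i : Fin N, ∏ s : Fin l, Φ (f s) i) * ∏ s : Fin l, Φ (f s) j = 0 := by
      apply Finset.sum_eq_zero
      intro f hf
      rw [hodd_sum f (Finset.mem_filter.mp hf).2, zero_mul]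
    have hpart1 : ∑ f ∈ K, (∑ i : Fin N, ∏ s : Fin l, Φ (f s) i) * ∏ s : Fin l, Φ (f s) j
        = K.card * ((N : ℝ) * (1 / (m : ℝ)) ^ n * (1 / (m : ℝ)) ^ n) := by
      rw [Finset.sum_congr rfl (fun f hf => by
        have hfe : ∀ v, Even (c f v) := (Finset.mem_filter.mp hf).2
        rw [heven_prod f hfe j,
          Finset.sum_congr rfl (fun i _ => heven_prod f hfe i), Finset.sum_const,
          Finset.card_univ, Fintype.card_fin, nsmul_eq_mul])]
      rw [Finset.sum_const, nsmul_eq_mul]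
    rw [hpart1, hpart2, add_zero]
    ring
  rw [hmain]
  have hfinal : (N : ℝ) * K.card * ((1 / (m : ℝ)) ^ n * (1 / (m : ℝ)) ^ n)
      ≤ (N : ℝ) * ((n : ℝ) ^ n * (m : ℝ) ^ n) * ((1 / (m : ℝ)) ^ n * (1 / (m : ℝ)) ^ n) := by
    apply mul_le_mul_of_nonneg_right _ (by positivity)
    apply mul_le_mul_of_nonneg_left hKcard (by positivity)
  refine hfinal.trans (le_of_eq ?_)
  field_simp
  rw [mul_assoc, ← mul_pow, ← mul_pow, mul_one_div_cancel hm0.ne', one_pow, one_pow, mul_one]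


lemma aux_good_spec (m N : ℕ) (Φ : Matrix (Fin m) (Fin N) ℝ)
    (hsq : ∀ i, ∑ r, Φ r i ^ 2 = (1 : ℝ))
    (I : Finset (Fin N)) (δ : ℝ) (hδ : 0 ≤ δ)
    (hgood : ∀ j ∈ I, ∑ i ∈ I.erase j, |∑ r, Φ r i * Φ r j| ≤ δ) :
    specNorm (gram Φ I - 1) ≤ δ := by
  have hApply : ∀ a b : {i // i ∈ I},
      (gram Φ I - 1) a b = (∑ r, Φ r (a : Fin N) * Φ r (b : Fin N))
        - if (a : Fin N) = (b : Fin N) then 1 else 0 := by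
    intro a b
    have h1 : (gram Φ I) a b = ∑ r, Φ r (a : Fin N) * Φ r (b : Fin N) := by
      simp [_root_.gram, colSub, Matrix.mul_apply, Matrix.transpose_apply]
    have h2 : (1 : Matrix {i // i ∈ I} {i // i ∈ I} ℝ) a b
        = if (a : Fin N) = (b : Fin N) then 1 else 0 := by
      rw [Matrix.one_apply]
      by_cases h : a = b
      · rw [if_pos h, if_pos (by rw [h])]
      · rw [if_neg h, if_neg (fun hc => h (Subtype.ext hc))]
    rw [Matrix.sub_apply, h1, h2]
  have hrowsum : ∀ a : {i // i ∈ I}, ∑ b, |(gram Φ I - 1) a b| ≤ δ := by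
    intro a
    have hsplit : ∑ b, |(gram Φ I - 1) a b|
        = |(gram Φ I - 1) a a| + ∑ b ∈ Finset.univ.erase a, |(gram Φ I - 1) a b| :=
      (Finset.add_sum_erase _ _ (Finset.mem_univ a)).symm
    have hdiag : (gram Φ I - 1) a a = 0 := by
      rw [hApply, if_pos rfl]
      have : ∑ r, Φ r (a : Fin N) * Φ r (a : Fin N) = 1 := by
        rw [← hsq (a : Fin N)]
        apply Finset.sum_congr rfl
        intro r _
        ring
      rw [this]; ring
    have hoff : ∑ b ∈ Finset.univ.erase a, |(gram Φ I - 1) a b|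
        = ∑ i ∈ I.erase (a : Fin N), |∑ r, Φ r i * Φ r (a : Fin N)| := by
      apply Finset.sum_bij (fun (b : {i // i ∈ I}) (_ : b ∈ Finset.univ.erase a) => (b : Fin N))
      · intro b hb
        rw [Finset.mem_erase] at hb ⊢
        exact ⟨fun hc => hb.1 (Subtype.ext hc), b.2⟩
      · intro b₁ _ b₂ _ h
        exact Subtype.ext h
      · intro i hi
        rw [Finset.mem_erase] at hi
        exact ⟨⟨i, hi.2⟩, Finset.mem_erase.mpr ⟨fun hc => hi.1 (congrArg Subtype.val hc), Finset.mem_univ _⟩, rfl⟩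
      · intro b hb
        rw [Finset.mem_erase] at hb
        rw [hApply, if_neg (fun hc => hb.1 (Subtype.ext hc.symm))]
        rw [sub_zero]
        congr 1
        apply Finset.sum_congr rfl
        intro r _
        ring
    rw [hsplit, hdiag, hoff, abs_zero, zero_add]
    exact hgood (a : Fin N) a.2
  have hsymm : ∀ a b : {i // i ∈ I}, (gram Φ I - 1) a b = (gram Φ I - 1) b a := by
    intro a b
    rw [hApply, hApply]
    have h1 : ∑ r, Φ r (a : Fin N) * Φ r (b : Fin N)
        = ∑ r, Φ r (b : Fin N) * Φ r (a : Fin N) := by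
      apply Finset.sum_congr rfl; intros; ring
    rw [h1]
    congr 1
    by_cases h : (a : Fin N) = (b : Fin N)
    · rw [if_pos h, if_pos h.symm]
    · rw [if_neg h, if_neg (fun hc => h hc.symm)]
  apply aux_specNorm_le _ hδ hrowsum
  intro b
  calc ∑ a, |(gram Φ I - 1) a b| = ∑ a, |(gram Φ I - 1) b a| := by
        apply Finset.sum_congr rfl
        intro a _
        rw [hsymm]
    _ ≤ δ := hrowsum b


lemma aux_choose (N k : ℕ) (h2 : 2 ≤ k) (hkN : k ≤ N) :
    (N - 2).choose (k - 2) * N ^ 2 ≤ N.choose k * k ^ 2 := by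
  obtain ⟨k', rfl⟩ : ∃ k', k = k' + 2 := ⟨k - 2, by omega⟩
  obtain ⟨N', rfl⟩ : ∃ N', N = N' + 2 := ⟨N - 2, by omega⟩
  have hkN' : k' ≤ N' := by omega
  simp only [Nat.add_sub_cancel]
  have h1 : (N' + 2) * (N' + 1).choose (k' + 1) = (N' + 2).choose (k' + 2) * (k' + 2) :=
    Nat.add_one_mul_choose_eq (N' + 1) (k' + 1)
  have h2 : (N' + 1) * N'.choose k' = (N' + 1).choose (k' + 1) * (k' + 1) :=
    Nat.add_one_mul_choose_eq N' k'
  have hid : (N' + 2).choose (k' + 2) * ((k' + 2) * (k' + 1))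
      = (N' + 2) * (N' + 1) * N'.choose k' := by
    calc (N' + 2).choose (k' + 2) * ((k' + 2) * (k' + 1))
        = ((N' + 2).choose (k' + 2) * (k' + 2)) * (k' + 1) := by ring
      _ = ((N' + 2) * (N' + 1).choose (k' + 1)) * (k' + 1) := by rw [h1]
      _ = (N' + 2) * ((N' + 1).choose (k' + 1) * (k' + 1)) := by ring
      _ = (N' + 2) * ((N' + 1) * N'.choose k') := by rw [h2]
      _ = (N' + 2) * (N' + 1) * N'.choose k' := by ring
  apply Nat.le_of_mul_le_mul_right _ (show 0 < (k' + 2) * (k' + 1) by positivity)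
  calc N'.choose k' * (N' + 2) ^ 2 * ((k' + 2) * (k' + 1))
      ≤ N'.choose k' * (N' + 2) * (k' + 2) * ((N' + 1) * (k' + 2)) := by
        have hle : (N' + 2) * (k' + 1) ≤ (N' + 1) * (k' + 2) := by nlinarith
        calc N'.choose k' * (N' + 2) ^ 2 * ((k' + 2) * (k' + 1))
            = N'.choose k' * (N' + 2) * (k' + 2) * ((N' + 2) * (k' + 1)) := by ring
          _ ≤ N'.choose k' * (N' + 2) * (k' + 2) * ((N' + 1) * (k' + 2)) :=
              Nat.mul_le_mul_left _ hle
    _ = ((N' + 2) * (N' + 1) * N'.choose k') * (k' + 2) ^ 2 := by ring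
    _ = (N' + 2).choose (k' + 2) * ((k' + 2) * (k' + 1)) * (k' + 2) ^ 2 := by rw [hid]
    _ = (N' + 2).choose (k' + 2) * (k' + 2) ^ 2 * ((k' + 2) * (k' + 1)) := by ring


lemma aux_paircount (N k : ℕ) (i j : Fin N) :
    (((Finset.powersetCard k (univ : Finset (Fin N))).filter
        (fun I => j ∈ I ∧ i ∈ I.erase j)).card) ≤ (N - 2).choose (k - 2) := by
  by_cases hij : i = j
  · have : ((Finset.powersetCard k (univ : Finset (Fin N))).filter
        (fun I => j ∈ I ∧ i ∈ I.erase j)) = ∅ := by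
      rw [Finset.filter_eq_empty_iff]
      rintro I _ ⟨-, hi⟩
      rw [hij] at hi
      exact (Finset.notMem_erase _ _) hi
    rw [this]
    simp
  · have hmain := Finset.card_le_card_of_injOn (f := fun I => (I.erase j).erase i)
      (s := ((Finset.powersetCard k (univ : Finset (Fin N))).filter
        (fun I => j ∈ I ∧ i ∈ I.erase j)))
      (t := Finset.powersetCard (k - 2) (((univ : Finset (Fin N)).erase j).erase i))
      ?mem ?inj
    · calc _ ≤ _ := hmain
        _ = (N - 2).choose (k - 2) := by
          rw [Finset.card_powersetCard]
          congr 1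
          rw [Finset.card_erase_of_mem (Finset.mem_erase.mpr ⟨hij, Finset.mem_univ i⟩),
            Finset.card_erase_of_mem (Finset.mem_univ j), Finset.card_univ, Fintype.card_fin]
          omega
    case mem =>
      intro I hI
      rw [Finset.mem_coe, Finset.mem_filter, Finset.mem_powersetCard] at hI
      obtain ⟨⟨hIsub, hIcard⟩, hjI, hiI⟩ := hI
      rw [Finset.mem_coe, Finset.mem_powersetCard]
      constructor
      · exact Finset.erase_subset_erase i (Finset.erase_subset_erase j hIsub)
      · rw [Finset.card_erase_of_mem hiI, Finset.card_erase_of_mem hjI, hIcard]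
        omega
    case inj =>
      intro I₁ hI₁ I₂ hI₂ heq
      have heq' : (I₁.erase j).erase i = (I₂.erase j).erase i := heq
      simp only [Finset.coe_filter, Set.mem_setOf_eq, Finset.mem_coe] at hI₁ hI₂
      obtain ⟨-, hj₁, hi₁⟩ := hI₁
      obtain ⟨-, hj₂, hi₂⟩ := hI₂
      have hi₁' := Finset.mem_of_mem_erase hi₁
      have hi₂' := Finset.mem_of_mem_erase hi₂
      ext x
      by_cases hxj : x = j
      · subst hxj; simp [hj₁, hj₂]
      by_cases hxi : x = i
      · subst hxi; simp [hi₁', hi₂']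
      · have h1 : x ∈ (I₁.erase j).erase i ↔ x ∈ I₁ := by
          simp [Finset.mem_erase, hxi, hxj]
        have h2 : x ∈ (I₂.erase j).erase i ↔ x ∈ I₂ := by
          simp [Finset.mem_erase, hxi, hxj]
        rw [← h1, ← h2, heq']

lemma aux_final (k l l' n mmm : ℕ) (δ ε : ℝ) (hδ : 0 < δ) (hε : 0 < ε) (hk : 2 ≤ k)
    (hl : l = l' + 1) (hln : l = n + n) (hn1 : 1 ≤ n) (hm1 : 1 ≤ mmm)
    (hm : (3 / 4 : ℝ) * l * ((k : ℝ) / δ) ^ 2 * ((k : ℝ) / ε) ^ ((2 : ℝ) / l) ≤ mmm) :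
    (k : ℝ) ^ l' * (k : ℝ) ^ 2 * ((n : ℝ) ^ n / (mmm : ℝ) ^ n) ≤ ε * δ ^ l := by
  have hkR : (0 : ℝ) < k := by exact_mod_cast (by omega : 0 < k)
  have hlR : (0 : ℝ) < l := by exact_mod_cast (by omega : 0 < l)
  have hnR : (0 : ℝ) < n := by exact_mod_cast (by omega : 0 < n)
  have hmR : (0 : ℝ) < mmm := by exact_mod_cast (by omega : 0 < mmm)
  have hkε : (0 : ℝ) < (k : ℝ) / ε := by positivity
  have hQ : (((k : ℝ) / ε) ^ ((2 : ℝ) / l)) ^ n = (k : ℝ) / ε := by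
    rw [← Real.rpow_natCast (((k : ℝ) / ε) ^ ((2 : ℝ) / l)) n, ← Real.rpow_mul hkε.le]
    have : (2 : ℝ) / l * n = 1 := by
      have hlc : (l : ℝ) = 2 * n := by exact_mod_cast (by omega : l = 2 * n)
      rw [hlc]
      field_simp
    rw [this, Real.rpow_one]
  have hbasepos : (0 : ℝ) < (3 / 4 : ℝ) * l * ((k : ℝ) / δ) ^ 2 * ((k : ℝ) / ε) ^ ((2 : ℝ) / l) := by
    have := Real.rpow_pos_of_pos hkε ((2 : ℝ) / l)
    positivity
  have h1 : ((3 / 4 : ℝ) * l * ((k : ℝ) / δ) ^ 2 * ((k : ℝ) / ε) ^ ((2 : ℝ) / l)) ^ n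
      ≤ (mmm : ℝ) ^ n := pow_le_pow_left₀ hbasepos.le hm n
  have h2 : ((3 / 4 : ℝ) * l * ((k : ℝ) / δ) ^ 2 * ((k : ℝ) / ε) ^ ((2 : ℝ) / l)) ^ n
      = ((3 / 4 : ℝ) * l) ^ n * ((k : ℝ) / δ) ^ l * ((k : ℝ) / ε) := by
    rw [mul_pow, mul_pow, hQ, ← pow_mul, show 2 * n = l by omega]
  rw [h2] at h1
  have h3 : (n : ℝ) ^ n ≤ ((3 / 4 : ℝ) * l) ^ n := by
    apply pow_le_pow_left₀ hnR.le
    have hlc : (l : ℝ) = 2 * n := by exact_mod_cast (by omega : l = 2 * n)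
    rw [hlc]
    linarith
  have hrw : (k : ℝ) ^ l' * (k : ℝ) ^ 2 * ((n : ℝ) ^ n / (mmm : ℝ) ^ n)
      = ((k : ℝ) ^ l' * (k : ℝ) ^ 2 * (n : ℝ) ^ n) / (mmm : ℝ) ^ n := by ring
  rw [hrw, div_le_iff₀ (by positivity)]
  have hkey : (n : ℝ) ^ n * (k : ℝ) ^ (l + 1) ≤ ε * δ ^ l * (mmm : ℝ) ^ n := by
    calc (n : ℝ) ^ n * (k : ℝ) ^ (l + 1)
        ≤ ((3 / 4 : ℝ) * l) ^ n * (k : ℝ) ^ (l + 1) := by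
          apply mul_le_mul_of_nonneg_right h3 (by positivity)
      _ = ε * δ ^ l * (((3 / 4 : ℝ) * l) ^ n * ((k : ℝ) / δ) ^ l * ((k : ℝ) / ε)) := by
          rw [div_pow]
          field_simp
          ring
      _ ≤ ε * δ ^ l * (mmm : ℝ) ^ n := by
          apply mul_le_mul_of_nonneg_left h1 (by positivity)
  have hfin : (k : ℝ) ^ l' * (k : ℝ) ^ 2 * (n : ℝ) ^ n = (n : ℝ) ^ n * (k : ℝ) ^ (l + 1) := by
    rw [hl]
    ring
  rw [hfin]
  exact hkey


end AuxLemmas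

/-- Theorem: StRIP matrices from orthogonal arrays. -/
theorem stmt17 (m N k t : ℕ)
    (Φ : Matrix (Fin m) (Fin N) ℝ)
    -- the columns have entries `±1/√m`
    (hentries : ∀ r j, Φ r j = 1 / Real.sqrt m ∨ Φ r j = -(1 / Real.sqrt m))
    -- the columns form an orthogonal array of strength `t`: for every `r ≤ t`
    -- coordinate positions, the projection of a uniformly random column onto those
    -- positions is uniform on `{±1/√m}^r`
    (hOA : ∀ r : ℕ, r ≤ t → ∀ p : Fin r → Fin m, Function.Injective p →
      ∀ v : Fin r → ℝ, (∀ s, v s = 1 / Real.sqrt m ∨ v s = -(1 / Real.sqrt m)) →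
      (((univ : Finset (Fin N)).filter fun j => ∀ s, Φ (p s) j = v s).card) * 2 ^ r = N)
    (l : ℕ) (hl2 : 2 ≤ l) (hlt : l ≤ t) (hleven : Even l)
    (δ ε : ℝ) (hδ : 0 < δ) (hε0 : 0 < ε) (hε1 : ε < 1)
    (hm : (3 / 4 : ℝ) * l * ((k : ℝ) / δ) ^ 2 * ((k : ℝ) / ε) ^ ((2 : ℝ) / l) ≤ m) :
    StRIP Φ k δ ε := by
    classical
  by_cases hkN : N < k
  · have hPe : Finset.powersetCard k (univ : Finset (Fin N)) = ∅ := by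
      rw [Finset.powersetCard_eq_empty]
      simpa using hkN
    unfold StRIP
    rw [hPe]
    simp
  push_neg at hkN
  have hδ0 : (0 : ℝ) ≤ δ := hδ.le
  have htriv : (∀ I ∈ Finset.powersetCard k (univ : Finset (Fin N)),
      specNorm (gram Φ I - 1) ≤ δ) → StRIP Φ k δ ε := by
    intro hall
    unfold StRIP
    rw [Finset.filter_true_of_mem hall]
    have h0 : (0 : ℝ) ≤ ((Finset.powersetCard k (univ : Finset (Fin N))).card : ℝ) :=
      Nat.cast_nonneg _
    nlinarith
  by_cases hk0 : k = 0
  · apply htriv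
    intro I hI
    rw [Finset.mem_powersetCard] at hI
    have hIe : I = ∅ := Finset.card_eq_zero.mp (by rw [hI.2, hk0])
    subst hIe
    have hie : IsEmpty {i // i ∈ (∅ : Finset (Fin N))} :=
      ⟨fun x => (Finset.notMem_empty _ x.2)⟩
    have hset : {t : ℝ | ∃ x : {i // i ∈ (∅ : Finset (Fin N))} → ℝ,
        (∑ j, x j ^ 2) ≤ 1 ∧ t = Real.sqrt (∑ i, (∑ j, (gram Φ ∅ - 1) i j * x j) ^ 2)}
        = {0} := by
      ext tv
      simp only [Set.mem_setOf_eq, Set.mem_singleton_iff]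
      constructor
      · rintro ⟨x, hx, rfl⟩
        rw [Finset.univ_eq_empty, Finset.sum_empty, Real.sqrt_zero]
      · rintro rfl
        refine ⟨fun _ => 0, ?_, ?_⟩
        · rw [Finset.univ_eq_empty, Finset.sum_empty]; exact zero_le_one
        · rw [Finset.univ_eq_empty, Finset.sum_empty, Real.sqrt_zero]
    show specNorm _ ≤ δ
    unfold specNorm
    rw [hset, csSup_singleton]
    exact hδ0
  have hk1 : 1 ≤ k := by omega
  have hl0 : (0 : ℝ) < l := by exact_mod_cast (by omega : 0 < l)
  have hkRpos : (0 : ℝ) < k := by exact_mod_cast hk1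
  have hbasepos : (0 : ℝ) < (3 / 4 : ℝ) * l * ((k : ℝ) / δ) ^ 2 * ((k : ℝ) / ε) ^ ((2 : ℝ) / l) := by
    have h3 : (0 : ℝ) < (k : ℝ) / ε := by positivity
    have := Real.rpow_pos_of_pos h3 ((2 : ℝ) / l)
    positivity
  have hmRpos : (0 : ℝ) < m := lt_of_lt_of_le hbasepos hm
  have hm1 : 1 ≤ m := Nat.cast_pos.mp hmRpos
  have hsq : ∀ r i, Φ r i ^ 2 = 1 / (m : ℝ) := by
    intro r i
    rcases hentries r i with h | h <;> rw [h]
    · rw [div_pow, one_pow, Real.sq_sqrt hmRpos.le]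
    · rw [neg_pow, div_pow, one_pow, Real.sq_sqrt hmRpos.le]; ring
  have hsqcol : ∀ i, ∑ r, Φ r i ^ 2 = (1 : ℝ) := by
    intro i
    rw [Finset.sum_congr rfl (fun r _ => hsq r i), Finset.sum_const, Finset.card_univ,
      Fintype.card_fin, nsmul_eq_mul]
    field_simp
  have hgs : ∀ I : Finset (Fin N), (∀ j ∈ I, ∑ i ∈ I.erase j, |∑ r, Φ r i * Φ r j| ≤ δ) →
      specNorm (gram Φ I - 1) ≤ δ := fun I h => aux_good_spec m N Φ hsqcol I δ hδ0 h
  by_cases hk1' : k = 1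
  · apply htriv
    intro I hI
    rw [Finset.mem_powersetCard] at hI
    apply hgs
    intro j hj
    have hIe : I.erase j = ∅ := by
      apply Finset.card_eq_zero.mp
      rw [Finset.card_erase_of_mem hj, hI.2, hk1']
    rw [hIe, Finset.sum_empty]
    exact hδ0
  have hk2 : 2 ≤ k := by omega
  have hlev : Even l := hleven
  obtain ⟨n, hln⟩ := hleven
  have hn1 : 1 ≤ n := by omega
  obtain ⟨l', hl'⟩ : ∃ l', l = l' + 1 := ⟨l - 1, by omega⟩
  unfold StRIP
  set P := Finset.powersetCard k (univ : Finset (Fin N)) with hPdef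
  set μ : Fin N → Fin N → ℝ := fun i j => ∑ r, Φ r i * Φ r j with hμdef
  set rs : Finset (Fin N) → Fin N → ℝ := fun I j => ∑ i ∈ I.erase j, |μ i j| with hrsdef
  have hrs0 : ∀ I j, 0 ≤ rs I j := fun I j => Finset.sum_nonneg (fun i _ => abs_nonneg _)
  have hμl0 : ∀ i j, (0 : ℝ) ≤ μ i j ^ l := fun i j => hlev.pow_nonneg _
  set Bad := P.filter (fun I => ¬ ∀ j ∈ I, rs I j ≤ δ) with hBad
  set Good := P.filter (fun I => ∀ j ∈ I, rs I j ≤ δ) with hGood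
  have hGoodsub : Good ⊆ P.filter (fun I => specNorm (gram Φ I - 1) ≤ δ) := by
    intro I hI
    rw [hGood, Finset.mem_filter] at hI
    rw [Finset.mem_filter]
    exact ⟨hI.1, hgs I hI.2⟩
  have hGoodle : ((Good.card : ℝ))
      ≤ ((P.filter (fun I => specNorm (gram Φ I - 1) ≤ δ)).card : ℝ) := by
    exact_mod_cast Finset.card_le_card hGoodsub
  have hcards : (Good.card : ℝ) + (Bad.card : ℝ) = (P.card : ℝ) := by
    rw [hGood, hBad]
    exact_mod_cast Finset.card_filter_add_card_filter_not
      (s := P) (p := fun I => ∀ j ∈ I, rs I j ≤ δ)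
  -- Markov chain bound on the bad count
  have hδl : (0 : ℝ) < δ ^ l := by positivity
  have step1 : (Bad.card : ℝ) * δ ^ l ≤ ∑ I ∈ P, ∑ j ∈ I, rs I j ^ l := by
    have hperI : ∀ I ∈ Bad, δ ^ l ≤ ∑ j ∈ I, rs I j ^ l := by
      intro I hI
      rw [hBad, Finset.mem_filter] at hI
      have h2 := hI.2
      push_neg at h2
      obtain ⟨j₀, hj₀I, hj₀⟩ := h2
      calc δ ^ l ≤ rs I j₀ ^ l := pow_le_pow_left₀ hδ0 hj₀.le l
        _ ≤ ∑ j ∈ I, rs I j ^ l :=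
          Finset.single_le_sum (fun j _ => pow_nonneg (hrs0 I j) l) hj₀I
    calc (Bad.card : ℝ) * δ ^ l = ∑ _I ∈ Bad, δ ^ l := by
          rw [Finset.sum_const, nsmul_eq_mul]
      _ ≤ ∑ I ∈ Bad, ∑ j ∈ I, rs I j ^ l := Finset.sum_le_sum hperI
      _ ≤ ∑ I ∈ P, ∑ j ∈ I, rs I j ^ l := by
          apply Finset.sum_le_sum_of_subset_of_nonneg (Finset.filter_subset _ _)
          intro I _ _
          exact Finset.sum_nonneg (fun j _ => pow_nonneg (hrs0 I j) l)
  have step2 : ∑ I ∈ P, ∑ j ∈ I, rs I j ^ l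
      ≤ (k : ℝ) ^ l' * ∑ I ∈ P, ∑ j ∈ I, ∑ i ∈ I.erase j, μ i j ^ l := by
    rw [Finset.mul_sum]
    apply Finset.sum_le_sum
    intro I hI
    rw [Finset.mul_sum]
    apply Finset.sum_le_sum
    intro j hj
    have hIP : I ∈ Finset.powersetCard k (univ : Finset (Fin N)) := by rw [← hPdef]; exact hI
    have hcard : ((I.erase j).card : ℝ) ≤ (k : ℝ) := by
      have h1 : (I.erase j).card ≤ I.card := Finset.card_erase_le
      have h2 : I.card = k := (Finset.mem_powersetCard.mp hIP).2
      exact_mod_cast h1.trans_eq h2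
    have habs : ∀ i ∈ I.erase j, (0 : ℝ) ≤ |μ i j| := fun i _ => abs_nonneg _
    have hjensen := pow_sum_le_card_mul_sum_pow habs l'
    rw [← hl'] at hjensen
    calc rs I j ^ l = (∑ i ∈ I.erase j, |μ i j|) ^ l := by rw [hrsdef]
      _ ≤ ((I.erase j).card : ℝ) ^ l' * ∑ i ∈ I.erase j, |μ i j| ^ l := hjensen
      _ ≤ (k : ℝ) ^ l' * ∑ i ∈ I.erase j, μ i j ^ l := by
          rw [Finset.sum_congr rfl (fun i _ => (Even.pow_abs hlev (μ i j) : |μ i j| ^ l = μ i j ^ l))]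
          apply mul_le_mul_of_nonneg_right
            (pow_le_pow_left₀ (Nat.cast_nonneg _) hcard l')
          exact Finset.sum_nonneg (fun i _ => hμl0 i j)
  have step3 : ∑ I ∈ P, ∑ j ∈ I, ∑ i ∈ I.erase j, μ i j ^ l
      ≤ (((N - 2).choose (k - 2) : ℕ) : ℝ) * ∑ j : Fin N, ∑ i : Fin N, μ i j ^ l := by
    have hexp : ∀ I : Finset (Fin N), ∑ j ∈ I, ∑ i ∈ I.erase j, μ i j ^ l
        = ∑ j : Fin N, ∑ i : Fin N, (if j ∈ I ∧ i ∈ I.erase j then μ i j ^ l else 0) := by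
      intro I
      calc ∑ j ∈ I, ∑ i ∈ I.erase j, μ i j ^ l
          = ∑ j : Fin N, (if j ∈ I then ∑ i ∈ I.erase j, μ i j ^ l else 0) := by
            rw [Finset.sum_ite_mem, Finset.univ_inter]
        _ = ∑ j : Fin N, ∑ i : Fin N, (if j ∈ I ∧ i ∈ I.erase j then μ i j ^ l else 0) := by
            apply Finset.sum_congr rfl
            intro j _
            by_cases hjI : j ∈ I
            · rw [if_pos hjI]
              rw [show (∑ i ∈ I.erase j, μ i j ^ l)
                  = ∑ i : Fin N, (if i ∈ I.erase j then μ i j ^ l else 0) from by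
                rw [Finset.sum_ite_mem, Finset.univ_inter]]
              apply Finset.sum_congr rfl
              intro i _
              by_cases hiI : i ∈ I.erase j
              · rw [if_pos hiI, if_pos ⟨hjI, hiI⟩]
              · rw [if_neg hiI, if_neg (fun hc => hiI hc.2)]
            · rw [if_neg hjI, eq_comm]
              apply Finset.sum_eq_zero
              intro i _
              rw [if_neg (fun hc => hjI hc.1)]
    calc ∑ I ∈ P, ∑ j ∈ I, ∑ i ∈ I.erase j, μ i j ^ l
        = ∑ j : Fin N, ∑ i : Fin N, ∑ I ∈ P, (if j ∈ I ∧ i ∈ I.erase j then μ i j ^ l else 0) := by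
          rw [Finset.sum_congr rfl (fun I _ => hexp I), Finset.sum_comm]
          apply Finset.sum_congr rfl
          intro j _
          rw [Finset.sum_comm]
      _ ≤ ∑ j : Fin N, ∑ i : Fin N, (((N - 2).choose (k - 2) : ℕ) : ℝ) * μ i j ^ l := by
          apply Finset.sum_le_sum
          intro j _
          apply Finset.sum_le_sum
          intro i _
          have hcount : ∑ I ∈ P, (if j ∈ I ∧ i ∈ I.erase j then μ i j ^ l else 0)
              = ((P.filter (fun I => j ∈ I ∧ i ∈ I.erase j)).card : ℝ) * μ i j ^ l := by
            rw [← Finset.sum_filter, Finset.sum_const, nsmul_eq_mul]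
          rw [hcount]
          apply mul_le_mul_of_nonneg_right _ (hμl0 i j)
          have hpc := aux_paircount N k i j
          rw [← hPdef] at hpc
          exact_mod_cast hpc
      _ = (((N - 2).choose (k - 2) : ℕ) : ℝ) * ∑ j : Fin N, ∑ i : Fin N, μ i j ^ l := by
          rw [Finset.mul_sum]
          apply Finset.sum_congr rfl
          intro j _
          rw [Finset.mul_sum]
  have step4 : ∑ j : Fin N, ∑ i : Fin N, μ i j ^ l ≤ (N : ℝ) * ((N : ℝ) * n ^ n / m ^ n) := by
    calc ∑ j : Fin N, ∑ i : Fin N, μ i j ^ l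
        ≤ ∑ _j : Fin N, ((N : ℝ) * n ^ n / m ^ n) := by
          apply Finset.sum_le_sum
          intro j _
          exact aux_moment m N t l n hm1 hln Φ hentries hOA hlt j
      _ = (N : ℝ) * ((N : ℝ) * n ^ n / m ^ n) := by
          rw [Finset.sum_const, Finset.card_univ, Fintype.card_fin, nsmul_eq_mul]
  have hPcard : P.card = N.choose k := by
    rw [hPdef, Finset.card_powersetCard, Finset.card_univ, Fintype.card_fin]
  have hC2N : (((N - 2).choose (k - 2) : ℕ) : ℝ) * (N : ℝ) ^ 2
      ≤ ((N.choose k : ℕ) : ℝ) * (k : ℝ) ^ 2 := by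
    exact_mod_cast aux_choose N k hk2 hkN
  have hfinal := aux_final k l l' n m δ ε hδ hε0 hk2 hl' hln hn1 hm1 hm
  have hchain : (Bad.card : ℝ) * δ ^ l
      ≤ (k : ℝ) ^ l' * ((((N - 2).choose (k - 2) : ℕ) : ℝ) * ((N : ℝ) * ((N : ℝ) * n ^ n / m ^ n))) := by
    have hkl' : (0 : ℝ) ≤ (k : ℝ) ^ l' := by positivity
    calc (Bad.card : ℝ) * δ ^ l ≤ ∑ I ∈ P, ∑ j ∈ I, rs I j ^ l := step1
      _ ≤ (k : ℝ) ^ l' * ∑ I ∈ P, ∑ j ∈ I, ∑ i ∈ I.erase j, μ i j ^ l := step2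
      _ ≤ (k : ℝ) ^ l' * ((((N - 2).choose (k - 2) : ℕ) : ℝ) * ∑ j : Fin N, ∑ i : Fin N, μ i j ^ l) :=
          mul_le_mul_of_nonneg_left step3 hkl'
      _ ≤ (k : ℝ) ^ l' * ((((N - 2).choose (k - 2) : ℕ) : ℝ) * ((N : ℝ) * ((N : ℝ) * n ^ n / m ^ n))) := by
          apply mul_le_mul_of_nonneg_left _ hkl'
          exact mul_le_mul_of_nonneg_left step4 (Nat.cast_nonneg _)
  have hb2 : (k : ℝ) ^ l' * ((((N - 2).choose (k - 2) : ℕ) : ℝ) * ((N : ℝ) * ((N : ℝ) * n ^ n / m ^ n)))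
      ≤ ((N.choose k : ℕ) : ℝ) * (ε * δ ^ l) := by
    calc (k : ℝ) ^ l' * ((((N - 2).choose (k - 2) : ℕ) : ℝ) * ((N : ℝ) * ((N : ℝ) * n ^ n / m ^ n)))
        = ((((N - 2).choose (k - 2) : ℕ) : ℝ) * (N : ℝ) ^ 2) * ((k : ℝ) ^ l' * ((n : ℝ) ^ n / (m : ℝ) ^ n)) := by
          ring
      _ ≤ (((N.choose k : ℕ) : ℝ) * (k : ℝ) ^ 2) * ((k : ℝ) ^ l' * ((n : ℝ) ^ n / (m : ℝ) ^ n)) := by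
          apply mul_le_mul_of_nonneg_right hC2N (by positivity)
      _ = ((N.choose k : ℕ) : ℝ) * ((k : ℝ) ^ l' * (k : ℝ) ^ 2 * ((n : ℝ) ^ n / (m : ℝ) ^ n)) := by
          ring
      _ ≤ ((N.choose k : ℕ) : ℝ) * (ε * δ ^ l) :=
          mul_le_mul_of_nonneg_left hfinal (Nat.cast_nonneg _)
  have hbadle : (Bad.card : ℝ) ≤ ε * (P.card : ℝ) := by
    have h := hchain.trans hb2
    have h2 : (Bad.card : ℝ) * δ ^ l ≤ (ε * ((N.choose k : ℕ) : ℝ)) * δ ^ l := by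
      calc (Bad.card : ℝ) * δ ^ l ≤ ((N.choose k : ℕ) : ℝ) * (ε * δ ^ l) := h
        _ = (ε * ((N.choose k : ℕ) : ℝ)) * δ ^ l := by ring
    have h3 := (mul_le_mul_iff_of_pos_right hδl).mp h2
    rw [show ((P.card : ℕ) : ℝ) = ((N.choose k : ℕ) : ℝ) from by exact_mod_cast hPcard]
    exact h3
  have hgoal : (1 - ε) * (P.card : ℝ) ≤ (Good.card : ℝ) := by linarith
  exact hgoal.trans hGoodle
end
end
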